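/- arXiv:2305.02495 — 4 statements merged into one kernel-verified Lean document; each statement's English description precedes it below -/
import Mathlib

section
/- Let m ≥ 1 be an integer and let g be a holomorphic function on the open unit disk 𝔻 with |g(t)| < 1 for all t ∈ 𝔻, whose Taylor expansion at 0 has the form g(t) = c_m t^m + c_{m+1} t^{m+1} + ⋯ (i.e., g vanishes at 0 to order at least m, and c_m is its m-th Taylor coefficient). Then for every t ∈ 𝔻 one has |g(t)| ≤ |t|^m · (|t| + |c_m|)/(1 + |c_m|·|t|). -/
open Metric

private lemma golusin_key_ineq {A x r c : ℝ} (hA : 0 ≤ A) (hA1 : A < 1) (hx : 0 ≤ x)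
    (hx1 : x < 1) (hr : 0 ≤ r) (hr1 : r < 1) (hc : c ≤ A * x)
    (hmain : A^2 - 2*c + x^2 ≤ r^2 * (1 - 2*c + A^2*x^2)) :
    x * (1 + A * r) ≤ A + r := by
  have h1 : (x - A)^2 ≤ r^2 * (1 - A*x)^2 := by
    nlinarith [mul_nonneg (sub_nonneg.2 hc) (by nlinarith : (0:ℝ) ≤ 1 - r^2)]
  have h2 : 0 < 1 - A * x := by nlinarith
  nlinarith [mul_nonneg hr h2.le, sq_nonneg (x - A + r*(1-A*x))]

private lemma golusin_mobius_lt {a w : ℂ} (ha : ‖a‖ < 1) (hw : ‖w‖ < 1) :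
    ‖(a - w) / (1 - (starRingEnd ℂ) a * w)‖ < 1 := by
  have hsq : Complex.normSq (a - w) < Complex.normSq (1 - (starRingEnd ℂ) a * w) := by
    have h1 : Complex.normSq a < 1 := by rw [← Complex.sq_norm]; nlinarith [norm_nonneg a]
    have h2 : Complex.normSq w < 1 := by rw [← Complex.sq_norm]; nlinarith [norm_nonneg w]
    simp only [Complex.normSq_apply, Complex.sub_re, Complex.sub_im, Complex.mul_re,
      Complex.mul_im, Complex.one_re, Complex.one_im, Complex.conj_re, Complex.conj_im] at *
    nlinarith [sq_nonneg (a.re*w.re + a.im*w.im), sq_nonneg (a.re*w.im - a.im*w.re)]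
  have habs : ‖a - w‖ < ‖1 - (starRingEnd ℂ) a * w‖ := by
    have := Real.sqrt_lt_sqrt (Complex.normSq_nonneg _) hsq
    simpa [Complex.norm_def] using this
  have hd : 0 < ‖1 - (starRingEnd ℂ) a * w‖ :=
    (norm_nonneg _).trans_lt habs
  rw [norm_div, div_lt_one hd]
  exact habs

/-- **Golusin's improvement of the Schwarz lemma** (inequality (13) of the paper).
If `g` is holomorphic on the unit disk with `|g| < 1` and vanishes at `0` to order at
least `m ≥ 1`, i.e. `g(t) = t^m h(t)` with `h` holomorphic on the disk (so that the
`m`-th Taylor coefficient of `g` is `c_m = h(0)`), then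
`|g(t)| ≤ |t|^m (|t| + |c_m|)/(1 + |c_m||t|)` for every `t` in the disk. -/
theorem golusin_schwarz_lemma (m : ℕ) (hm : 1 ≤ m) (g h : ℂ → ℂ)
    (hg : DifferentiableOn ℂ g (ball (0 : ℂ) 1))
    (hh : DifferentiableOn ℂ h (ball (0 : ℂ) 1))
    (hfac : ∀ t ∈ ball (0 : ℂ) 1, g t = t ^ m * h t)
    (hbound : ∀ t ∈ ball (0 : ℂ) 1, ‖g t‖ < 1) :
    ∀ t ∈ ball (0 : ℂ) 1,
      ‖g t‖ ≤ ‖t‖ ^ m *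
        ((‖t‖ + ‖h 0‖) / (1 + ‖h 0‖ * ‖t‖)) := by
  -- Step 1: `|h| ≤ 1` on the ball, by the maximum principle on smaller balls.
  have hle1 : ∀ z ∈ ball (0 : ℂ) 1, ‖h z‖ ≤ 1 := by
    intro z hz
    rw [mem_ball_zero_iff] at hz
    have key : ∀ r : ℝ, ‖z‖ < r → r < 1 → ‖h z‖ ≤ 1 / r ^ m := by
      intro r hzr hr1
      have hr0 : 0 < r := (norm_nonneg z).trans_lt hzr
      have hsub : closedBall (0 : ℂ) r ⊆ ball 0 1 := closedBall_subset_ball hr1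
      have hdc : DiffContOnCl ℂ h (ball 0 r) := by
        refine DifferentiableOn.diffContOnCl ?_
        rw [closure_ball _ hr0.ne']
        exact hh.mono hsub
      have hfront : ∀ w ∈ frontier (ball (0 : ℂ) r), ‖h w‖ ≤ 1 / r ^ m := by
        intro w hw
        rw [frontier_ball _ hr0.ne', mem_sphere_zero_iff_norm] at hw
        have hw1 : w ∈ ball (0 : ℂ) 1 := by rw [mem_ball_zero_iff, hw]; exact hr1
        have hb := hbound w hw1
        have hfw := hfac w hw1
        have habs : ‖g w‖ = r ^ m * ‖h w‖ := by
          rw [hfw, norm_mul, norm_pow]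
          rw [hw]
        rw [le_div_iff₀ (by positivity)]
        nlinarith [pow_pos hr0 m]
      have hclos : z ∈ closure (ball (0 : ℂ) r) := by
        rw [closure_ball _ hr0.ne', mem_closedBall_zero_iff]
        exact hzr.le
      have := Complex.norm_le_of_forall_mem_frontier_norm_le isBounded_ball hdc hfront hclos
      simpa using this
    have htend : Filter.Tendsto (fun r : ℝ => 1 / r ^ m) (nhdsWithin 1 (Set.Iio 1)) (nhds 1) := by
      have hc : ContinuousAt (fun r : ℝ => 1 / r ^ m) 1 :=
        ContinuousAt.div continuousAt_const (continuousAt_pow _ _) (by norm_num)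
      have := hc.continuousWithinAt (s := Set.Iio 1)
      simpa using this.tendsto
    refine ge_of_tendsto htend ?_
    filter_upwards [Ioo_mem_nhdsLT_of_mem ⟨hz, le_rfl⟩] with r hr
    exact key r hr.1 hr.2
  intro t ht
  have ht0 : (0 : ℂ) ∈ ball (0 : ℂ) 1 := mem_ball_self one_pos
  have hA1 : ‖h 0‖ ≤ 1 := hle1 0 ht0
  set a := h 0 with ha_def
  set A := ‖a‖ with hA_def
  set r := ‖t‖ with hr_def
  have hr1 : r < 1 := mem_ball_zero_iff.1 ht
  have hr0 : 0 ≤ r := norm_nonneg t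
  have hgabs : ‖g t‖ = r ^ m * ‖h t‖ := by
    rw [hfac t ht, norm_mul, norm_pow]
  rcases eq_or_lt_of_le hA1 with hAeq | hAlt
  · -- `|h 0| = 1`: `h` is constant by the maximum principle
    -- here hAeq : A = 1
    have h01 : ‖h 0‖ = 1 := by rw [← ha_def, ← hA_def]; exact hAeq
    have hmax : IsMaxOn (norm ∘ h) (ball (0 : ℂ) 1) 0 := by
      intro z hz
      simp only [Function.comp_apply, Set.mem_setOf_eq]
      rw [h01]
      exact hle1 z hz
    have hconst := Complex.eqOn_of_isPreconnected_of_isMaxOn_norm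
      (convex_ball (0 : ℂ) 1).isPreconnected isOpen_ball hh ht0 hmax ht
    have hxt : ‖h t‖ = 1 := by
      rw [hconst]; simpa [Function.const] using h01
    rw [hgabs, hxt, mul_one]
    have hra : (r + A) / (1 + A * r) = 1 := by
      rw [hAeq, one_mul, div_eq_one_iff_eq (by positivity)]; ring
    rw [hra, mul_one]
  · -- `|h 0| < 1`: Schwarz–Pick via a Möbius transformation
    have hstrict : ∀ z ∈ ball (0 : ℂ) 1, ‖h z‖ < 1 := by
      intro z hz
      rcases lt_or_eq_of_le (hle1 z hz) with h' | h'
      · exact h'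
      · exfalso
        have hmax : IsMaxOn (norm ∘ h) (ball (0 : ℂ) 1) z := by
          intro w hw
          simp only [Function.comp_apply, Set.mem_setOf_eq]
          rw [h']
          exact hle1 w hw
        have hconst := Complex.eqOn_of_isPreconnected_of_isMaxOn_norm
          (convex_ball (0 : ℂ) 1).isPreconnected isOpen_ball hh hz hmax ht0
        have h0z : a = h z := by simpa using hconst
        have : A = 1 := by rw [hA_def, h0z]; exact h'
        rw [this] at hAlt
        exact lt_irrefl _ hAlt
    set F : ℂ → ℂ := fun z => (a - h z) / (1 - (starRingEnd ℂ) a * h z) with hF_def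
    have hden_ne : ∀ z ∈ ball (0 : ℂ) 1, (1 - (starRingEnd ℂ) a * h z) ≠ 0 := by
      intro z hz h0
      have hlt : ‖(starRingEnd ℂ) a * h z‖ < 1 := by
        rw [norm_mul, Complex.norm_conj]
        calc A * ‖h z‖ ≤ A * 1 :=
              mul_le_mul_of_nonneg_left (hle1 z hz) (norm_nonneg a)
          _ < 1 := by rw [mul_one]; exact hAlt
      rw [sub_eq_zero] at h0
      rw [← h0] at hlt
      simp at hlt
    have hFdiff : DifferentiableOn ℂ F (ball (0 : ℂ) 1) := by
      apply DifferentiableOn.div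
      · exact (differentiableOn_const a).sub hh
      · exact (differentiableOn_const _).sub ((differentiableOn_const _).mul hh)
      · exact hden_ne
    have hF0 : F 0 = 0 := by simp [hF_def, ← ha_def]
    have hFmaps : Set.MapsTo F (ball (0 : ℂ) 1) (ball (0 : ℂ) 1) := by
      intro z hz
      rw [mem_ball_zero_iff]
      exact golusin_mobius_lt hAlt (hstrict z hz)
    have hFt : ‖F t‖ ≤ r :=
      Complex.norm_le_norm_of_mapsTo_ball hFdiff (hFmaps.mono_right ball_subset_closedBall) hF0
        (z := t) (by rwa [mem_ball_zero_iff] at ht)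
    have hdne := hden_ne t ht
    have hdpos : 0 < ‖1 - (starRingEnd ℂ) a * h t‖ := by
      rcases (norm_nonneg (1 - (starRingEnd ℂ) a * h t)).lt_or_eq with h' | h'
      · exact h'
      · exact absurd (norm_eq_zero.1 h'.symm) hdne
    have hnum : ‖a - h t‖ ≤ r * ‖1 - (starRingEnd ℂ) a * h t‖ := by
      have h' := hFt
      rw [hF_def] at h'
      simp only [norm_div] at h'
      rwa [div_le_iff₀ hdpos] at h'
    set x := ‖h t‖ with hx_def
    have hx0 : 0 ≤ x := norm_nonneg _
    have hx1 : x < 1 := hstrict t ht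
    set c := ((starRingEnd ℂ) a * h t).re with hc_def
    have hA0 : 0 ≤ A := norm_nonneg a
    have hsq1 : ‖a - h t‖ ^ 2 = A^2 - 2*c + x^2 := by
      rw [hc_def, hA_def, hx_def, Complex.sq_norm, Complex.sq_norm, Complex.sq_norm]
      simp only [Complex.normSq_apply, Complex.sub_re, Complex.sub_im, Complex.mul_re,
        Complex.mul_im, Complex.conj_re, Complex.conj_im]
      ring
    have hsq2 : ‖1 - (starRingEnd ℂ) a * h t‖ ^ 2 = 1 - 2*c + A^2*x^2 := by
      rw [hc_def, hA_def, hx_def, Complex.sq_norm, Complex.sq_norm, Complex.sq_norm]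
      simp only [Complex.normSq_apply, Complex.sub_re, Complex.sub_im, Complex.mul_re,
        Complex.mul_im, Complex.one_re, Complex.one_im, Complex.conj_re, Complex.conj_im]
      ring
    have hcle : c ≤ A * x := by
      calc c ≤ ‖(starRingEnd ℂ) a * h t‖ := Complex.re_le_norm _
        _ = A * x := by rw [norm_mul, Complex.norm_conj]
    have hmain : A^2 - 2*c + x^2 ≤ r^2 * (1 - 2*c + A^2*x^2) := by
      rw [← hsq1, ← hsq2]
      calc ‖a - h t‖ ^ 2
          ≤ (r * ‖1 - (starRingEnd ℂ) a * h t‖)^2 :=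
            pow_le_pow_left₀ (norm_nonneg _) hnum 2
        _ = r^2 * ‖1 - (starRingEnd ℂ) a * h t‖ ^ 2 := by ring
    have hfinal : x * (1 + A * r) ≤ A + r :=
      golusin_key_ineq hA0 hAlt hx0 hx1 hr0 hr1 hcle hmain
    have hden : (0:ℝ) < 1 + A * r := by positivity
    have hxle : x ≤ (r + A) / (1 + A * r) := by
      rw [le_div_iff₀ hden]
      linarith
    rw [hgabs]
    exact mul_le_mul_of_nonneg_left hxle (by positivity)
end

section
/- Let D ⊂ ℂ be a domain, M > 0, and let λ : D → (0, M] be upper semicontinuous with generalized Laplacian satisfying Δ(log λ)(z) ≥ 4·λ(z)² at every z ∈ D, and let λ₀ : D → (0, M] be of class C² with (ordinary) Laplacian satisfying Δ(log λ₀)(z) = 4·λ₀(z)² on D. If λ(z) ≤ λ₀(z) for all z ∈ D, then the function u := log(λ/λ₀) satisfies the generalized-Laplacian inequality Δu(z) ≥ 8M²·u(z) at every point z ∈ D. -/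
open MeasureTheory Filter Set

/-- The extended-real analogue of `ENNReal.ofReal`: the nonnegative part of an
extended real number, sending `⊤` to `⊤` and everything `≤ 0` (including `⊥`) to `0`. -/
noncomputable def EReal.toENN (x : EReal) : ENNReal :=
  if x = ⊤ then ⊤ else ENNReal.ofReal x.toReal

/-- The mean value `(1/(2π)) ∫₀^{2π} u(z + r e^{iθ}) dθ` of an extended-real-valued
function over the circle of radius `r` centered at `z`, computed as the difference of the
lower integrals of the positive and negative parts. -/
noncomputable def circleMean (u : ℂ → EReal) (z : ℂ) (r : ℝ) : EReal :=
  (((2 * Real.pi)⁻¹ : ℝ) : EReal) *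
    (((∫⁻ θ in Set.Ioc (0 : ℝ) (2 * Real.pi),
        EReal.toENN (u (z + r * Complex.exp (θ * Complex.I)))) : ENNReal) -
     ((∫⁻ θ in Set.Ioc (0 : ℝ) (2 * Real.pi),
        EReal.toENN (-(u (z + r * Complex.exp (θ * Complex.I))))) : ENNReal))

/-- The generalized Laplacian
`Δu(z) = 4 liminf_{r→0⁺} r⁻² [(1/(2π)) ∫₀^{2π} u(z + re^{iθ}) dθ − u(z)]`. -/
noncomputable def genLap (u : ℂ → EReal) (z : ℂ) : EReal :=
  (4 : EReal) * Filter.liminf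
    (fun r : ℝ => (((r ^ 2)⁻¹ : ℝ) : EReal) * (circleMean u z r - u z))
    (nhdsWithin 0 (Set.Ioi 0))

/-- The ordinary Laplacian `Δf = ∂²f/∂x² + ∂²f/∂y²` of a function `f : ℂ → ℝ`. -/
noncomputable def lap (f : ℂ → ℝ) (z : ℂ) : ℝ :=
  deriv (deriv (fun t : ℝ => f (z + (t : ℂ)))) 0 +
  deriv (deriv (fun t : ℝ => f (z + (t : ℂ) * Complex.I))) 0

lemma elem_ineq {M s t : ℝ} (hs : 0 < s) (hst : s ≤ t) (htM : t ≤ M) :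
    2 * M ^ 2 * Real.log (s / t) ≤ s ^ 2 - t ^ 2 := by
  have ht : 0 < t := lt_of_lt_of_le hs hst
  have hM : 0 < M := lt_of_lt_of_le ht htM
  have hlog : (t - s) / M ≤ Real.log (t / s) := by
    have h1 : Real.log (s / t) ≤ s / t - 1 :=
      Real.log_le_sub_one_of_pos (by positivity)
    have h2 : Real.log (s / t) = - Real.log (t / s) := by
      rw [← Real.log_inv]; congr 1; field_simp
    have h3 : 1 - s / t ≤ Real.log (t / s) := by
      rw [h2] at h1; linarith
    have h4 : (t - s) / M ≤ 1 - s / t := by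
      have h5 : 1 - s / t = (t - s) / t := by field_simp
      rw [h5, div_le_div_iff₀ hM ht]
      nlinarith
    linarith
  have h2 : Real.log (s / t) = - Real.log (t / s) := by
    rw [← Real.log_inv]; congr 1; field_simp
  rw [h2]
  have hts : 0 ≤ t - s := by linarith
  have : (t - s) * (t + s) ≤ 2 * M ^ 2 * Real.log (t / s) := by
    have hlog' : t - s ≤ M * Real.log (t / s) := by
      rw [div_le_iff₀ hM] at hlog; linarith
    have hlogpos : 0 ≤ Real.log (t / s) := by
      apply Real.log_nonneg; rw [le_div_iff₀ hs]; linarith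
    nlinarith
  nlinarith



lemma hasDerivAt_line (v : ℂ → ℝ) (w c : ℂ) (t : ℝ)
    (hv : DifferentiableAt ℝ v (w + t • c)) :
    HasDerivAt (fun s : ℝ => v (w + s • c)) (fderiv ℝ v (w + t • c) c) t := by
  have hline : HasDerivAt (fun s : ℝ => w + s • c) c t := by
    simpa using ((hasDerivAt_id t).smul_const c).const_add w
  exact (hv.hasFDerivAt.comp_hasDerivAt t hline)

lemma hasDerivAt_line2 (v : ℂ → ℝ) (w c : ℂ) (t : ℝ)
    (hv : DifferentiableAt ℝ (fderiv ℝ v) (w + t • c)) :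
    HasDerivAt (fun s : ℝ => fderiv ℝ v (w + s • c) c)
      (fderiv ℝ (fderiv ℝ v) (w + t • c) c c) t := by
  have hline : HasDerivAt (fun s : ℝ => w + s • c) c t := by
    simpa using ((hasDerivAt_id t).smul_const c).const_add w
  have h1 : HasDerivAt (fun s : ℝ => fderiv ℝ v (w + s • c))
      (fderiv ℝ (fderiv ℝ v) (w + t • c) c) t :=
    (hv.hasFDerivAt.comp_hasDerivAt t hline)
  have := h1.clm_apply (hasDerivAt_const t c)
  simpa using this

lemma second_deriv_line (v : ℂ → ℝ) {S : Set ℂ} (hS : IsOpen S) (hv : ContDiffOn ℝ 2 v S)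
    (c : ℂ) {z : ℂ} (hz : z ∈ S) :
    deriv (deriv (fun t : ℝ => v (z + t • c))) 0 = fderiv ℝ (fderiv ℝ v) z c c := by
  have hv1 : ContDiffOn ℝ 1 (fderiv ℝ v) S := hv.fderiv_of_isOpen hS (by norm_num)
  have hmem : ∀ᶠ t : ℝ in nhds 0, z + t • c ∈ S := by
    have hcont : Continuous fun t : ℝ => z + t • c := by continuity
    have : (fun t : ℝ => z + t • c) ⁻¹' S ∈ nhds (0 : ℝ) := by
      apply (hS.preimage hcont).mem_nhds; simp [hz]
    exact this
  have hder : (fun t : ℝ => deriv (fun s : ℝ => v (z + s • c)) t)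
      =ᶠ[nhds 0] fun t : ℝ => fderiv ℝ v (z + t • c) c := by
    filter_upwards [hmem] with t ht
    exact (hasDerivAt_line v z c t ((hv.differentiableOn (by norm_num)).differentiableAt
      (hS.mem_nhds ht))).deriv
  rw [hder.deriv_eq]
  have := (hasDerivAt_line2 v z c 0 (by
    simpa using (hv1.differentiableOn one_ne_zero).differentiableAt (hS.mem_nhds hz))).deriv
  simpa using this

lemma lap_eq (v : ℂ → ℝ) {S : Set ℂ} (hS : IsOpen S) (hv : ContDiffOn ℝ 2 v S)
    {z : ℂ} (hz : z ∈ S) :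
    lap v z = fderiv ℝ (fderiv ℝ v) z 1 1 + fderiv ℝ (fderiv ℝ v) z Complex.I Complex.I := by
  have h1 : (fun t : ℝ => v (z + (t : ℂ))) = fun t : ℝ => v (z + t • (1 : ℂ)) := by
    funext t; simp [Complex.real_smul]
  have h2 : (fun t : ℝ => v (z + (t : ℂ) * Complex.I))
      = fun t : ℝ => v (z + t • Complex.I) := by
    funext t; simp [Complex.real_smul]
  rw [lap, h1, h2, second_deriv_line v hS hv 1 hz, second_deriv_line v hS hv Complex.I hz]

lemma taylor_bound (v : ℂ → ℝ) {S : Set ℂ} (hS : IsOpen S) (hv : ContDiffOn ℝ 2 v S)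
    {z : ℂ} {ρ : ℝ} (hball : Metric.closedBall z ρ ⊆ S) {r : ℝ} (hr : 0 < r) (hrρ : r ≤ ρ)
    (e : ℂ) (he : ‖e‖ = 1) :
    ∃ p ∈ Metric.closedBall z ρ,
      v (z + r • e) = v z + r * (fderiv ℝ v z e)
        + fderiv ℝ (fderiv ℝ v) p e e * r ^ 2 / 2 := by
  set g : ℝ → ℝ := fun s => v (z + s • e) with hg
  have hmem : ∀ s : ℝ, |s| ≤ ρ → z + s • e ∈ S := by
    intro s hs
    apply hball
    simp only [Metric.mem_closedBall, dist_eq_norm]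
    rw [add_sub_cancel_left]
    rw [norm_smul, he, mul_one]
    exact hs
  have hdiffv : ∀ s : ℝ, |s| ≤ ρ → DifferentiableAt ℝ v (z + s • e) := fun s hs =>
    (hv.differentiableOn (by norm_num)).differentiableAt
      (hS.mem_nhds (hmem s hs))
  have hv1 : ContDiffOn ℝ 1 (fderiv ℝ v) S := hv.fderiv_of_isOpen hS (by norm_num)
  have hdiffv' : ∀ s : ℝ, |s| ≤ ρ → DifferentiableAt ℝ (fderiv ℝ v) (z + s • e) := fun s hs =>
    (hv1.differentiableOn one_ne_zero).differentiableAt (hS.mem_nhds (hmem s hs))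
  -- g is C¹ on Icc 0 r
  have hmapsto : MapsTo (fun s : ℝ => z + s • e) (Icc 0 r) S := by
    intro s hs
    exact hmem s (by rw [abs_of_nonneg hs.1]; exact le_trans hs.2 hrρ)
  have hline : ContDiff ℝ 2 (fun s : ℝ => z + s • e) :=
    (contDiff_const.add ((contDiff_id).smul contDiff_const))
  have hgC : ContDiffOn ℝ 1 g (Icc 0 r) :=
    ((hv.of_le (by norm_num)).comp (hline.of_le (by norm_num)).contDiffOn hmapsto)
  -- derivWithin g within Icc agrees with ψ on interior
  have habs : ∀ s : ℝ, s ∈ Icc (0:ℝ) r → |s| ≤ ρ := by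
    intro s hs; rw [abs_of_nonneg hs.1]; exact le_trans hs.2 hrρ
  set ψ : ℝ → ℝ := fun s => fderiv ℝ v (z + s • e) e with hψ
  have hgderiv : ∀ s : ℝ, |s| ≤ ρ → deriv g s = ψ s := by
    intro s hs
    exact (hasDerivAt_line v z e s (hdiffv s hs)).deriv
  have hIccnhds : ∀ x ∈ Ioo (0:ℝ) r, Icc (0:ℝ) r ∈ nhds x := by
    intro x hx
    exact mem_nhds_iff.2 ⟨Ioo 0 r, Ioo_subset_Icc_self, isOpen_Ioo, hx⟩
  have hderivWithin_eq : ∀ x ∈ Ioo (0:ℝ) r, derivWithin g (Icc 0 r) x = ψ x := by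
    intro x hx
    rw [derivWithin_of_mem_nhds (hIccnhds x hx)]
    exact hgderiv x (habs x (Ioo_subset_Icc_self hx))
  have hψdiff : ∀ s : ℝ, |s| ≤ ρ → HasDerivAt ψ
      (fderiv ℝ (fderiv ℝ v) (z + s • e) e e) s := fun s hs =>
    hasDerivAt_line2 v z e s (hdiffv' s hs)
  have hf' : DifferentiableOn ℝ (iteratedDerivWithin 1 g (Icc 0 r)) (Ioo 0 r) := by
    intro x hx
    have h1 : iteratedDerivWithin 1 g (Icc 0 r)
        =ᶠ[nhds x] ψ := by
      filter_upwards [isOpen_Ioo.mem_nhds hx] with y hy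
      rw [iteratedDerivWithin_one]
      exact hderivWithin_eq y hy
    have : DifferentiableAt ℝ ψ x := (hψdiff x (habs x (Ioo_subset_Icc_self hx))).differentiableAt
    exact (this.congr_of_eventuallyEq h1).differentiableWithinAt
  obtain ⟨x', hx', htay⟩ := taylor_mean_remainder_lagrange (f := g) (n := 1) hr.ne
    (by rwa [uIcc_of_le hr.le]) (by rwa [uIcc_of_le hr.le, uIoo_of_lt hr])
  rw [uIcc_of_le hr.le] at htay
  rw [uIoo_of_lt hr] at hx'
  -- compute taylorWithinEval
  have htayeval : taylorWithinEval g 1 (Icc 0 r) 0 r = g 0 + r * ψ 0 := by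
    rw [taylorWithinEval_succ, taylor_within_zero_eval]
    have h0 : derivWithin g (Icc 0 r) 0 = ψ 0 := by
      have hgd : DifferentiableAt ℝ g 0 :=
        (hasDerivAt_line v z e 0 (hdiffv 0 (by simp [le_of_lt (lt_of_lt_of_le hr hrρ)]))).differentiableAt
      rw [hgd.derivWithin ((uniqueDiffOn_Icc hr) 0 (by simp [le_of_lt hr]))]
      exact hgderiv 0 (by simp [le_of_lt (lt_of_lt_of_le hr hrρ)])
    simp only [iteratedDerivWithin_one, h0,
      Nat.factorial_zero, Nat.cast_one, inv_one, one_mul, smul_eq_mul]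
    rw [iteratedDerivWithin_one, h0]
    norm_num
  -- compute the second iterated derivative at x'
  have hiter2 : iteratedDerivWithin 2 g (Icc 0 r) x'
      = fderiv ℝ (fderiv ℝ v) (z + x' • e) e e := by
    have hu : UniqueDiffWithinAt ℝ (Icc (0:ℝ) r) x' :=
      (uniqueDiffOn_Icc hr) x' (Ioo_subset_Icc_self hx')
    rw [show (2:ℕ) = 1 + 1 from rfl, iteratedDerivWithin_succ]
    rw [derivWithin_of_mem_nhds (hIccnhds x' hx')]
    have h1 : iteratedDerivWithin 1 g (Icc 0 r) =ᶠ[nhds x'] ψ := by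
      filter_upwards [isOpen_Ioo.mem_nhds hx'] with y hy
      rw [iteratedDerivWithin_one]
      exact hderivWithin_eq y hy
    rw [h1.deriv_eq]
    exact (hψdiff x' (habs x' (Ioo_subset_Icc_self hx'))).deriv
  refine ⟨z + x' • e, ?_, ?_⟩
  · simp only [Metric.mem_closedBall, dist_eq_norm, add_sub_cancel_left, norm_smul, he, mul_one]
    rw [Real.norm_eq_abs]
    exact habs x' (Ioo_subset_Icc_self hx')
  · rw [htayeval, hiter2] at htay
    have : ψ 0 = fderiv ℝ v z e := by simp [hψ]
    rw [this] at htay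
    have hgr : g r = v (z + r • e) := rfl
    have hg0 : g 0 = v z := by simp [hg]
    rw [hgr, hg0] at htay
    norm_num [Nat.factorial] at htay
    simp only [Complex.real_smul]
    linarith

set_option maxHeartbeats 1000000 in
lemma mean_upper (v : ℂ → ℝ) {S : Set ℂ} (hS : IsOpen S) (hv : ContDiffOn ℝ 2 v S)
    {z : ℂ} (hz : z ∈ S) {ε : ℝ} (hε : 0 < ε) :
    ∀ᶠ r : ℝ in nhdsWithin (0:ℝ) (Set.Ioi 0),
      ∫ θ in Ioc (0:ℝ) (2*Real.pi), v (z + r * Complex.exp (θ * Complex.I))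
        ≤ 2*Real.pi * v z
          + r^2 * Real.pi * (fderiv ℝ (fderiv ℝ v) z 1 1
              + fderiv ℝ (fderiv ℝ v) z Complex.I Complex.I) / 2
          + r^2 * Real.pi * ε := by
  have hBcont : ContinuousOn (fderiv ℝ (fderiv ℝ v)) S :=
    (hv.fderiv_of_isOpen hS (by norm_num)).continuousOn_fderiv_of_isOpen hS le_rfl
  have hBat : ContinuousAt (fderiv ℝ (fderiv ℝ v)) z := hBcont.continuousAt (hS.mem_nhds hz)
  obtain ⟨δ, hδ, hδ'⟩ := (Metric.continuousAt_iff (β := ℂ →L[ℝ] ℂ →L[ℝ] ℝ)).1 hBat ε hε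
  obtain ⟨δ₂, hδ₂, hδ₂'⟩ := Metric.isOpen_iff.1 hS z hz
  set ρ := min δ δ₂ / 2 with hρdef
  have hρ : 0 < ρ := by positivity
  have hρδ : ρ < δ := by
    rw [hρdef]; rcases le_total δ δ₂ with h | h
    · rw [min_eq_left h]; linarith
    · rw [min_eq_right h]; linarith
  have hρδ₂ : ρ < δ₂ := by
    rw [hρdef]; rcases le_total δ δ₂ with h | h
    · rw [min_eq_left h]; linarith
    · rw [min_eq_right h]; linarith
  have hball : Metric.closedBall z ρ ⊆ S := by
    intro w hw
    apply hδ₂'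
    simp only [Metric.mem_closedBall] at hw
    simp only [Metric.mem_ball]
    linarith
  have hBclose : ∀ w ∈ Metric.closedBall z ρ,
      ‖fderiv ℝ (fderiv ℝ v) w - fderiv ℝ (fderiv ℝ v) z‖ ≤ ε := by
    intro w hw
    simp only [Metric.mem_closedBall] at hw
    have h1 : dist w z < δ := by linarith
    have := hδ' h1
    exact le_of_lt (lt_of_eq_of_lt (dist_eq_norm (E := ℂ →L[ℝ] ℂ →L[ℝ] ℝ) _ _).symm this)
  filter_upwards [Ioc_mem_nhdsGT_of_mem (Set.mem_Ico.2 ⟨le_refl 0, hρ⟩)] with r hr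
  obtain ⟨hr0, hrρ⟩ := hr
  -- pointwise bound
  have hpt : ∀ θ : ℝ, v (z + r * Complex.exp (θ * Complex.I))
      ≤ v z + r * (Real.cos θ * fderiv ℝ v z 1 + Real.sin θ * fderiv ℝ v z Complex.I)
        + (Real.cos θ^2 * fderiv ℝ (fderiv ℝ v) z 1 1
            + Real.cos θ * Real.sin θ * (fderiv ℝ (fderiv ℝ v) z 1 Complex.I
                + fderiv ℝ (fderiv ℝ v) z Complex.I 1)
            + Real.sin θ^2 * fderiv ℝ (fderiv ℝ v) z Complex.I Complex.I) * r^2/2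
        + ε * r^2/2 := by
    intro θ
    have hnorm : ‖Complex.exp (θ * Complex.I)‖ = 1 := by
      rw [Complex.norm_exp_ofReal_mul_I]
    obtain ⟨p, hp, heq⟩ := taylor_bound v hS hv hball hr0 hrρ _ hnorm
    have hesplit : Complex.exp (θ * Complex.I)
        = Real.cos θ • (1:ℂ) + Real.sin θ • Complex.I := by
      rw [Complex.exp_mul_I]
      simp [Complex.real_smul, ← Complex.ofReal_cos, ← Complex.ofReal_sin]
    have hLe : fderiv ℝ v z (Complex.exp (θ * Complex.I))
        = Real.cos θ * fderiv ℝ v z 1 + Real.sin θ * fderiv ℝ v z Complex.I := by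
      rw [hesplit, map_add, ContinuousLinearMap.map_smul, ContinuousLinearMap.map_smul]
      simp [smul_eq_mul]
    have hBe : ∀ q : ℂ, fderiv ℝ (fderiv ℝ v) q (Complex.exp (θ * Complex.I))
          (Complex.exp (θ * Complex.I))
        = Real.cos θ^2 * fderiv ℝ (fderiv ℝ v) q 1 1
          + Real.cos θ * Real.sin θ * (fderiv ℝ (fderiv ℝ v) q 1 Complex.I
              + fderiv ℝ (fderiv ℝ v) q Complex.I 1)
          + Real.sin θ^2 * fderiv ℝ (fderiv ℝ v) q Complex.I Complex.I := by
      intro q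
      nth_rewrite 1 [hesplit]
      nth_rewrite 1 [hesplit]
      simp only [map_add, ContinuousLinearMap.map_smul, ContinuousLinearMap.add_apply,
        ContinuousLinearMap.smul_apply, smul_eq_mul]
      ring
    have hBp : fderiv ℝ (fderiv ℝ v) p (Complex.exp (θ * Complex.I))
          (Complex.exp (θ * Complex.I))
        ≤ fderiv ℝ (fderiv ℝ v) z (Complex.exp (θ * Complex.I))
            (Complex.exp (θ * Complex.I)) + ε := by
      set E := Complex.exp (θ * Complex.I)
      have h1 : fderiv ℝ (fderiv ℝ v) p E E - fderiv ℝ (fderiv ℝ v) z E E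
          = ((fderiv ℝ (fderiv ℝ v) p - fderiv ℝ (fderiv ℝ v) z) E) E := by
        simp [ContinuousLinearMap.sub_apply]
      have h2 : ((fderiv ℝ (fderiv ℝ v) p - fderiv ℝ (fderiv ℝ v) z) E) E
          ≤ ‖((fderiv ℝ (fderiv ℝ v) p - fderiv ℝ (fderiv ℝ v) z) E) E‖ := le_abs_self _
      have h3 : ‖((fderiv ℝ (fderiv ℝ v) p - fderiv ℝ (fderiv ℝ v) z) E) E‖
          ≤ ‖(fderiv ℝ (fderiv ℝ v) p - fderiv ℝ (fderiv ℝ v) z) E‖ * ‖E‖ :=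
        ContinuousLinearMap.le_opNorm _ _
      have h4 : ‖(fderiv ℝ (fderiv ℝ v) p - fderiv ℝ (fderiv ℝ v) z) E‖
          ≤ ‖fderiv ℝ (fderiv ℝ v) p - fderiv ℝ (fderiv ℝ v) z‖ * ‖E‖ :=
        ContinuousLinearMap.le_opNorm _ _
      have h5 := hBclose p hp
      rw [hnorm] at h3 h4
      simp only [mul_one] at h3 h4
      linarith
    have hre : z + (r:ℂ) * Complex.exp (θ * Complex.I)
        = z + r • Complex.exp (θ * Complex.I) := by rw [Complex.real_smul]
    rw [hre, heq, hLe, hBe p]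
    rw [hBe p, hBe z] at hBp
    nlinarith [hBp, sq_nonneg r]
  -- continuity of the two integrands
  have hwcont : Continuous fun θ : ℝ => z + (r:ℂ) * Complex.exp (θ * Complex.I) := by
    fun_prop
  have hcont_v : Continuous fun θ : ℝ => v (z + r * Complex.exp (θ * Complex.I)) := by
    rw [continuous_iff_continuousAt]
    intro θ
    have hmem : z + (r:ℂ) * Complex.exp (θ * Complex.I) ∈ S := by
      apply hball
      simp only [Metric.mem_closedBall, dist_eq_norm, add_sub_cancel_left, norm_mul]
      rw [Complex.norm_exp_ofReal_mul_I, mul_one]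
      simpa [abs_of_pos hr0] using hrρ
    have hca : ContinuousAt v ((fun θ : ℝ => z + (r:ℂ) * Complex.exp (θ * Complex.I)) θ) :=
      hv.continuousOn.continuousAt (hS.mem_nhds hmem)
    exact ContinuousAt.comp (g := v)
      (f := fun θ : ℝ => z + (r:ℂ) * Complex.exp (θ * Complex.I)) (x := θ)
      hca hwcont.continuousAt
  set g : ℝ → ℝ := fun θ => v z + r * (Real.cos θ * fderiv ℝ v z 1
        + Real.sin θ * fderiv ℝ v z Complex.I)
        + (Real.cos θ^2 * fderiv ℝ (fderiv ℝ v) z 1 1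
            + Real.cos θ * Real.sin θ * (fderiv ℝ (fderiv ℝ v) z 1 Complex.I
                + fderiv ℝ (fderiv ℝ v) z Complex.I 1)
            + Real.sin θ^2 * fderiv ℝ (fderiv ℝ v) z Complex.I Complex.I) * r^2/2
        + ε * r^2/2 with hg
  have hcont_g : Continuous g := by
    rw [hg]; fun_prop
  have hint : ∫ θ in Ioc (0:ℝ) (2*Real.pi), v (z + r * Complex.exp (θ * Complex.I))
      ≤ ∫ θ in Ioc (0:ℝ) (2*Real.pi), g θ := by
    apply setIntegral_mono_on (hcont_v.integrableOn_Ioc) (hcont_g.integrableOn_Ioc)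
      measurableSet_Ioc
    intro θ _
    exact hpt θ
  have hgval : ∫ θ in Ioc (0:ℝ) (2*Real.pi), g θ
      = 2*Real.pi * v z + r^2 * Real.pi * (fderiv ℝ (fderiv ℝ v) z 1 1
          + fderiv ℝ (fderiv ℝ v) z Complex.I Complex.I) / 2
        + 2*Real.pi*(ε * r^2/2) := by
    rw [← intervalIntegral.integral_of_le Real.two_pi_pos.le]
    rw [hg]
    have h1 : ∀ θ : ℝ, v z + r * (Real.cos θ * fderiv ℝ v z 1
        + Real.sin θ * fderiv ℝ v z Complex.I)
        + (Real.cos θ^2 * fderiv ℝ (fderiv ℝ v) z 1 1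
            + Real.cos θ * Real.sin θ * (fderiv ℝ (fderiv ℝ v) z 1 Complex.I
                + fderiv ℝ (fderiv ℝ v) z Complex.I 1)
            + Real.sin θ^2 * fderiv ℝ (fderiv ℝ v) z Complex.I Complex.I) * r^2/2
        + ε * r^2/2
        = (v z + ε * r^2/2) + (r * fderiv ℝ v z 1) * Real.cos θ
          + (r * fderiv ℝ v z Complex.I) * Real.sin θ
          + (fderiv ℝ (fderiv ℝ v) z 1 1 * (r^2/2)) * Real.cos θ^2
          + ((fderiv ℝ (fderiv ℝ v) z 1 Complex.I
              + fderiv ℝ (fderiv ℝ v) z Complex.I 1) * (r^2/2)) * (Real.sin θ * Real.cos θ)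
          + (fderiv ℝ (fderiv ℝ v) z Complex.I Complex.I * (r^2/2)) * Real.sin θ^2 := by
      intro θ; ring
    simp_rw [h1]
    have i1 : IntervalIntegrable (fun _ : ℝ => v z + ε * r^2/2) volume 0 (2*Real.pi) :=
      intervalIntegrable_const
    have i2 : IntervalIntegrable (fun θ : ℝ => (r * fderiv ℝ v z 1) * Real.cos θ)
        volume 0 (2*Real.pi) :=
      (continuous_const.mul Real.continuous_cos).intervalIntegrable _ _
    have i3 : IntervalIntegrable (fun θ : ℝ => (r * fderiv ℝ v z Complex.I) * Real.sin θ)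
        volume 0 (2*Real.pi) :=
      (continuous_const.mul Real.continuous_sin).intervalIntegrable _ _
    have i4 : IntervalIntegrable (fun θ : ℝ =>
        (fderiv ℝ (fderiv ℝ v) z 1 1 * (r^2/2)) * Real.cos θ^2) volume 0 (2*Real.pi) :=
      (continuous_const.mul (Real.continuous_cos.pow 2)).intervalIntegrable _ _
    have i5 : IntervalIntegrable (fun θ : ℝ =>
        ((fderiv ℝ (fderiv ℝ v) z 1 Complex.I + fderiv ℝ (fderiv ℝ v) z Complex.I 1) * (r^2/2))
          * (Real.sin θ * Real.cos θ)) volume 0 (2*Real.pi) :=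
      (continuous_const.mul (Real.continuous_sin.mul Real.continuous_cos)).intervalIntegrable _ _
    have i6 : IntervalIntegrable (fun θ : ℝ =>
        (fderiv ℝ (fderiv ℝ v) z Complex.I Complex.I * (r^2/2)) * Real.sin θ^2)
        volume 0 (2*Real.pi) :=
      (continuous_const.mul (Real.continuous_sin.pow 2)).intervalIntegrable _ _
    rw [intervalIntegral.integral_add ((((i1.add i2).add i3).add i4).add i5) i6,
        intervalIntegral.integral_add (((i1.add i2).add i3).add i4) i5,
        intervalIntegral.integral_add ((i1.add i2).add i3) i4,
        intervalIntegral.integral_add (i1.add i2) i3,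
        intervalIntegral.integral_add i1 i2]
    rw [intervalIntegral.integral_const, intervalIntegral.integral_const_mul,
        intervalIntegral.integral_const_mul, intervalIntegral.integral_const_mul,
        intervalIntegral.integral_const_mul, intervalIntegral.integral_const_mul,
        integral_cos, integral_sin, integral_cos_sq, integral_sin_sq,
        integral_sin_mul_cos₁]
    simp [Real.sin_two_pi, Real.cos_two_pi, smul_eq_mul]
    ring
  calc ∫ θ in Ioc (0:ℝ) (2*Real.pi), v (z + r * Complex.exp (θ * Complex.I))
      ≤ ∫ θ in Ioc (0:ℝ) (2*Real.pi), g θ := hint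
    _ = _ := by rw [hgval]; ring

@[simp] lemma EReal.toENN_coe (x : ℝ) : EReal.toENN ((x : ℝ) : EReal) = ENNReal.ofReal x := by
  rw [EReal.toENN]
  simp [EReal.coe_ne_top]

lemma ennreal_coe_ereal_eq (x : ENNReal) (hx : x ≠ ⊤) :
    (x : EReal) = ((x.toReal : ℝ) : EReal) := by
  conv_lhs => rw [← ENNReal.ofReal_toReal hx]
  rw [EReal.coe_ennreal_ofReal, max_eq_left ENNReal.toReal_nonneg]

lemma split_ineq (D : Set ℂ) (hD : IsOpen D) (lam lam0 : ℂ → ℝ) (M : ℝ)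
    (husc : UpperSemicontinuousOn lam D) (hpos : ∀ x ∈ D, 0 < lam x)
    (hMle : ∀ x ∈ D, lam x ≤ M) (hle : ∀ x ∈ D, lam x ≤ lam0 x)
    (h0pos : ∀ x ∈ D, 0 < lam0 x) (h0cont : ContinuousOn lam0 D)
    (z : ℂ) (r : ℝ) (hr : 0 < r)
    (hmem : ∀ θ : ℝ, z + r * Complex.exp (θ * Complex.I) ∈ D) :
    circleMean (fun w => ((Real.log (lam w) : ℝ) : EReal)) z r
      ≤ circleMean (fun w => ((Real.log (lam w / lam0 w) : ℝ) : EReal)) z r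
        + (((2*Real.pi)⁻¹ * ∫ θ in Set.Ioc (0:ℝ) (2*Real.pi),
            Real.log (lam0 (z + r * Complex.exp (θ * Complex.I))) : ℝ) : EReal) := by
  set w : ℝ → ℂ := fun θ => z + r * Complex.exp (θ * Complex.I) with hw
  set F : ℝ → ℝ := fun θ => Real.log (lam (w θ)) with hF
  set V : ℝ → ℝ := fun θ => Real.log (lam0 (w θ)) with hV
  set U : ℝ → ℝ := fun θ => Real.log (lam (w θ) / lam0 (w θ)) with hU
  set K : Set ℝ := Set.Ioc (0:ℝ) (2*Real.pi) with hK
  have hwcont : Continuous w := by rw [hw]; fun_prop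
  -- basic pointwise facts
  have hlampos : ∀ θ, 0 < lam (w θ) := fun θ => hpos _ (hmem θ)
  have hlam0pos : ∀ θ, 0 < lam0 (w θ) := fun θ => h0pos _ (hmem θ)
  have hUFV : ∀ θ, U θ = F θ - V θ := fun θ =>
    Real.log_div (ne_of_gt (hlampos θ)) (ne_of_gt (hlam0pos θ))
  have hUnonpos : ∀ θ, U θ ≤ 0 := by
    intro θ
    rw [hUFV]
    have := Real.log_le_log (hlampos θ) (hle _ (hmem θ))
    simp [hF, hV]; linarith [this]
  -- measurability
  have hUSC : UpperSemicontinuous fun θ => lam (w θ) := by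
    intro θ
    have h1 : UpperSemicontinuousAt lam (w θ) := by
      intro y hy
      have h2 := husc (w θ) (hmem θ) y hy
      rwa [nhdsWithin_eq_nhds.2 (hD.mem_nhds (hmem θ))] at h2
    exact UpperSemicontinuousAt.comp h1 hwcont.continuousAt
  have hFmeas : Measurable F := Real.measurable_log.comp hUSC.measurable
  have hVcont : Continuous V := by
    rw [continuous_iff_continuousAt]
    intro θ
    have h1 : ContinuousAt lam0 (w θ) := h0cont.continuousAt (hD.mem_nhds (hmem θ))
    have h2 : ContinuousAt (lam0 ∘ w) θ := h1.comp hwcont.continuousAt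
    have h3 : ContinuousAt (Real.log ∘ lam0 ∘ w) θ :=
      ContinuousAt.comp (Real.continuousAt_log (ne_of_gt (hlam0pos θ))) h2
    exact h3
  have hUmeas : Measurable U := by
    have : U = fun θ => F θ - V θ := funext hUFV
    rw [this]
    exact hFmeas.sub hVcont.measurable
  -- lintegrals
  set Ap : ENNReal := ∫⁻ θ in K, ENNReal.ofReal (F θ) with hAp
  set Am : ENNReal := ∫⁻ θ in K, ENNReal.ofReal (-F θ) with hAm
  set Bm : ENNReal := ∫⁻ θ in K, ENNReal.ofReal (-U θ) with hBm
  set Cp : ENNReal := ∫⁻ θ in K, ENNReal.ofReal (V θ) with hCp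
  set Cm : ENNReal := ∫⁻ θ in K, ENNReal.ofReal (-V θ) with hCm
  -- finiteness
  have hApfin : Ap ≠ ⊤ := by
    have hbound : ∀ θ, ENNReal.ofReal (F θ) ≤ ENNReal.ofReal (max (Real.log M) 0) := by
      intro θ
      apply ENNReal.ofReal_le_ofReal
      have := Real.log_le_log (hlampos θ) (hMle _ (hmem θ))
      calc F θ ≤ Real.log M := this
        _ ≤ max (Real.log M) 0 := le_max_left _ _
    have h1 : Ap ≤ ENNReal.ofReal (max (Real.log M) 0) * volume K := by
      rw [hAp]
      calc ∫⁻ θ in K, ENNReal.ofReal (F θ)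
          ≤ ∫⁻ _ in K, ENNReal.ofReal (max (Real.log M) 0) :=
            lintegral_mono fun θ => hbound θ
        _ = ENNReal.ofReal (max (Real.log M) 0) * volume K := setLIntegral_const _ _
    apply ne_top_of_le_ne_top _ h1
    rw [hK, Real.volume_Ioc]
    exact ENNReal.mul_ne_top ENNReal.ofReal_ne_top ENNReal.ofReal_ne_top
  have hVint : IntegrableOn V K := hVcont.integrableOn_Ioc
  have hfin_of_int : ∀ (g : ℝ → ℝ), IntegrableOn g K →
      (∫⁻ θ in K, ENNReal.ofReal (g θ)) ≠ ⊤ := by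
    intro g hg
    have h1 : (∫⁻ θ in K, ENNReal.ofReal (g θ)) ≤ ∫⁻ θ in K, (‖g θ‖₊ : ENNReal) := by
      apply lintegral_mono
      intro θ
      dsimp only
      rw [← enorm_eq_nnnorm, Real.enorm_eq_ofReal_abs]
      exact ENNReal.ofReal_le_ofReal (le_abs_self _)
    exact ne_top_of_le_ne_top (ne_of_lt hg.hasFiniteIntegral) h1
  have hCpfin : Cp ≠ ⊤ := hfin_of_int V hVint
  have hCmfin : Cm ≠ ⊤ := by
    have := hfin_of_int (fun θ => -V θ) hVint.neg
    simpa [hCm] using this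
  -- the key ENNReal identity
  have hkey : Ap + (Bm + Cm) = Am + Cp := by
    have hptwise : ∀ θ, ENNReal.ofReal (F θ) + (ENNReal.ofReal (-U θ) + ENNReal.ofReal (-V θ))
        = ENNReal.ofReal (-F θ) + ENNReal.ofReal (V θ) := by
      intro θ
      have h1 : F θ = U θ + V θ := by rw [hUFV]; ring
      have h2 : U θ ≤ 0 := hUnonpos θ
      rcases le_total 0 (F θ) with hf | hf
      · have hv : 0 ≤ V θ := by linarith
        rw [ENNReal.ofReal_eq_zero.2 (by linarith : -F θ ≤ 0),
            ENNReal.ofReal_eq_zero.2 (by linarith : -V θ ≤ 0), zero_add, add_zero,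
            ← ENNReal.ofReal_add hf (by linarith : 0 ≤ -U θ)]
        congr 1; linarith
      · rcases le_total 0 (V θ) with hv | hv
        · rw [ENNReal.ofReal_eq_zero.2 hf, ENNReal.ofReal_eq_zero.2 (by linarith : -V θ ≤ 0),
              zero_add, add_zero, ← ENNReal.ofReal_add (by linarith : (0:ℝ) ≤ -F θ) hv]
          congr 1; linarith
        · rw [ENNReal.ofReal_eq_zero.2 hf, ENNReal.ofReal_eq_zero.2 hv, zero_add, add_zero,
              ← ENNReal.ofReal_add (by linarith : (0:ℝ) ≤ -U θ) (by linarith : (0:ℝ) ≤ -V θ)]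
          congr 1; linarith
    have hlhs : ∫⁻ θ in K, (ENNReal.ofReal (F θ)
        + (ENNReal.ofReal (-U θ) + ENNReal.ofReal (-V θ))) = Ap + (Bm + Cm) := by
      rw [lintegral_add_left (hFmeas.ennreal_ofReal) _,
          lintegral_add_left (f := fun θ => ENNReal.ofReal (-U θ)) (hUmeas.neg.ennreal_ofReal) _]
    have hrhs : ∫⁻ θ in K, (ENNReal.ofReal (-F θ) + ENNReal.ofReal (V θ)) = Am + Cp := by
      rw [lintegral_add_left (f := fun θ => ENNReal.ofReal (-F θ)) (hFmeas.neg.ennreal_ofReal) _]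
    rw [← hlhs, ← hrhs]
    exact lintegral_congr fun θ => hptwise θ
  -- identify circleMean with our lintegrals
  have e1 : (∫⁻ θ in Set.Ioc (0:ℝ) (2*Real.pi),
      EReal.toENN ((Real.log (lam (z + r * Complex.exp (θ * Complex.I))) : ℝ) : EReal)) = Ap :=
    lintegral_congr fun θ => by simp only [EReal.toENN_coe]; rfl
  have e2 : (∫⁻ θ in Set.Ioc (0:ℝ) (2*Real.pi),
      EReal.toENN (-((Real.log (lam (z + r * Complex.exp (θ * Complex.I))) : ℝ) : EReal))) = Am :=
    lintegral_congr fun θ => by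
      rw [← EReal.coe_neg]
      simp only [EReal.toENN_coe]; rfl
  have e3 : (∫⁻ θ in Set.Ioc (0:ℝ) (2*Real.pi),
      EReal.toENN ((Real.log (lam (z + r * Complex.exp (θ * Complex.I)) /
        lam0 (z + r * Complex.exp (θ * Complex.I))) : ℝ) : EReal)) = 0 := by
    rw [← lintegral_zero (μ := volume.restrict (Set.Ioc (0:ℝ) (2*Real.pi)))]
    apply lintegral_congr
    intro θ
    simp only [EReal.toENN_coe]
    exact ENNReal.ofReal_eq_zero.2 (hUnonpos θ)
  have e4 : (∫⁻ θ in Set.Ioc (0:ℝ) (2*Real.pi),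
      EReal.toENN (-((Real.log (lam (z + r * Complex.exp (θ * Complex.I)) /
        lam0 (z + r * Complex.exp (θ * Complex.I))) : ℝ) : EReal))) = Bm :=
    lintegral_congr fun θ => by
      rw [← EReal.coe_neg]
      simp only [EReal.toENN_coe]; rfl
  have hCMf : circleMean (fun w => ((Real.log (lam w) : ℝ) : EReal)) z r
      = (((2 * Real.pi)⁻¹ : ℝ) : EReal) * ((Ap : EReal) - (Am : EReal)) := by
    rw [circleMean, e1, e2]
  have hCMu : circleMean (fun w => ((Real.log (lam w / lam0 w) : ℝ) : EReal)) z r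
      = (((2 * Real.pi)⁻¹ : ℝ) : EReal) * (((0:ENNReal) : EReal) - (Bm : EReal)) := by
    rw [circleMean, e3, e4]
  have hVval : (∫ θ in Set.Ioc (0:ℝ) (2*Real.pi),
      Real.log (lam0 (z + r * Complex.exp (θ * Complex.I)))) = Cp.toReal - Cm.toReal := by
    have h := integral_eq_lintegral_pos_part_sub_lintegral_neg_part hVint
    exact h
  have hπ : (0:ℝ) < (2 * Real.pi)⁻¹ := by positivity
  by_cases hBmtop : Bm = ⊤
  · -- left side is ⊥
    have hAmtop : Am = ⊤ := by
      by_contra hAm'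
      have h1 : Ap + (Bm + Cm) = ⊤ := by rw [hBmtop]; simp
      rw [hkey] at h1
      rcases ENNReal.add_eq_top.1 h1 with h | h
      · exact hAm' h
      · exact hCpfin h
    rw [hCMf, hAmtop, EReal.coe_ennreal_top, EReal.sub_top, EReal.coe_mul_bot_of_pos hπ]
    exact bot_le
  · have hAmfin : Am ≠ ⊤ := by
      intro hAm'
      have h1 : Ap + (Bm + Cm) ≠ ⊤ :=
        ENNReal.add_ne_top.2 ⟨hApfin, ENNReal.add_ne_top.2 ⟨hBmtop, hCmfin⟩⟩
      rw [hkey] at h1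
      exact (ENNReal.add_ne_top.1 h1).1 hAm'
    have hreal : Ap.toReal + (Bm.toReal + Cm.toReal) = Am.toReal + Cp.toReal := by
      have h := congrArg ENNReal.toReal hkey
      rw [ENNReal.toReal_add hApfin (ENNReal.add_ne_top.2 ⟨hBmtop, hCmfin⟩),
        ENNReal.toReal_add hBmtop hCmfin, ENNReal.toReal_add hAmfin hCpfin] at h
      exact h
    rw [hCMf, hCMu, hVval,
      ennreal_coe_ereal_eq Ap hApfin, ennreal_coe_ereal_eq Am hAmfin,
      ennreal_coe_ereal_eq Bm hBmtop,
      show (((0:ENNReal)) : EReal) = ((0:ℝ) : EReal) by simp]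
    have hgoal : (2 * Real.pi)⁻¹ * (Ap.toReal - Am.toReal)
        ≤ (2 * Real.pi)⁻¹ * (0 - Bm.toReal) + (2 * Real.pi)⁻¹ * (Cp.toReal - Cm.toReal) := by
      have h2 : Ap.toReal - Am.toReal ≤ (0 - Bm.toReal) + (Cp.toReal - Cm.toReal) := by
        linarith
      nlinarith [h2, hπ]
    exact_mod_cast hgoal


lemma ereal_le_of_four_mul {a : ℝ} {L : EReal} (h : ((4*a : ℝ) : EReal) ≤ (4 : EReal) * L) :
    (a : EReal) ≤ L := by
  induction L using EReal.rec with
  | bot =>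
    rw [show (4 : EReal) = ((4:ℝ) : EReal) by norm_cast] at h
    rw [EReal.coe_mul_bot_of_pos (by norm_num), le_bot_iff] at h
    exact absurd h (EReal.coe_ne_bot _)
  | coe l =>
    rw [show (4 : EReal) = ((4:ℝ) : EReal) by norm_cast, ← EReal.coe_mul] at h
    rw [EReal.coe_le_coe_iff] at h
    exact EReal.coe_le_coe_iff.2 (by linarith)
  | top => exact le_top

lemma ereal_four_mul_le {a : ℝ} {L : EReal} (h : (a : EReal) ≤ L) :
    ((4*a : ℝ) : EReal) ≤ (4 : EReal) * L := by
  induction L using EReal.rec with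
  | bot => exact absurd h (by simp)
  | coe l =>
    rw [show (4 : EReal) = ((4:ℝ) : EReal) by norm_cast, ← EReal.coe_mul]
    rw [EReal.coe_le_coe_iff] at h ⊢
    linarith
  | top =>
    rw [EReal.mul_top_of_pos (by norm_num : (0:EReal) < 4)]
    exact le_top

lemma ereal_le_of_forall_eps {A : ℝ} {L : EReal}
    (h : ∀ ε : ℝ, 0 < ε → ((A - ε : ℝ) : EReal) ≤ L) : (A : EReal) ≤ L := by
  induction L using EReal.rec with
  | bot =>
    have h1 := h 1 one_pos
    rw [le_bot_iff] at h1
    exact absurd h1 (EReal.coe_ne_bot _)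
  | coe l =>
    rw [EReal.coe_le_coe_iff]
    by_contra h'
    push_neg at h'
    have := EReal.coe_le_coe_iff.1 (h ((A - l)/2) (by linarith))
    linarith
  | top => exact le_top

lemma per_r_bound {q m Fz Vz lz2 l02 eps : ℝ} (hq : 0 < q) (CF CU : EReal)
    (hsplit : CF ≤ CU + ((m : ℝ) : EReal))
    (hc : ((lz2 - eps : ℝ) : EReal) < ((q : ℝ) : EReal) * (CF - ((Fz : ℝ) : EReal)))
    (ht : q * (m - Vz) ≤ l02 + eps) :
    ((lz2 - l02 - 2*eps : ℝ) : EReal) ≤ ((q : ℝ) : EReal) * (CU - ((Fz - Vz : ℝ) : EReal)) := by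
  induction CU using EReal.rec with
  | top =>
    rw [EReal.top_sub_coe, EReal.coe_mul_top_of_pos hq]
    exact le_top
  | bot =>
    rw [EReal.bot_add, le_bot_iff] at hsplit
    rw [hsplit, EReal.bot_sub, EReal.coe_mul_bot_of_pos hq] at hc
    exact absurd hc (by simp)
  | coe y =>
    induction CF using EReal.rec with
    | top =>
      rw [show ((y:ℝ) : EReal) + ((m:ℝ) : EReal) = ((y + m : ℝ) : EReal) from
        (EReal.coe_add y m).symm, top_le_iff] at hsplit
      exact absurd hsplit (EReal.coe_ne_top _)
    | bot =>
      rw [EReal.bot_sub, EReal.coe_mul_bot_of_pos hq] at hc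
      exact absurd hc (by simp)
    | coe x =>
      rw [← EReal.coe_add, EReal.coe_le_coe_iff] at hsplit
      rw [← EReal.coe_sub, ← EReal.coe_mul, EReal.coe_lt_coe_iff] at hc
      rw [← EReal.coe_sub, ← EReal.coe_mul, EReal.coe_le_coe_iff]
      have h1 : x - m - Fz + Vz ≤ y - Fz + Vz := by linarith
      have h2 := mul_le_mul_of_nonneg_left h1 (le_of_lt hq)
      nlinarith [h2, hc, ht]


/-- Key differential inequality from step 4⁰ of the proof of Theorem 1: if
`λ : D → (0, M]` is upper semicontinuous with generalized Laplacian satisfying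
`Δ(log λ) ≥ 4λ²`, `λ₀ : D → (0, M]` is `C²` with `Δ(log λ₀) = 4λ₀²` (ordinary
Laplacian), and `λ ≤ λ₀` on `D`, then `u = log(λ/λ₀)` satisfies `Δu ≥ 8M² u` on `D`. -/
theorem log_quotient_laplacian_ineq (D : Set ℂ) (hDopen : IsOpen D) (hDconn : IsConnected D)
    (M : ℝ) (hM : 0 < M) (lam lam0 : ℂ → ℝ)
    (hlam_pos : ∀ z ∈ D, 0 < lam z) (hlam_le : ∀ z ∈ D, lam z ≤ M)
    (husc : UpperSemicontinuousOn lam D)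
    (hlap : ∀ z ∈ D,
      ((4 * lam z ^ 2 : ℝ) : EReal) ≤ genLap (fun w => ((Real.log (lam w) : ℝ) : EReal)) z)
    (hC2 : ContDiffOn ℝ 2 lam0 D)
    (hlam0_pos : ∀ z ∈ D, 0 < lam0 z) (hlam0_le : ∀ z ∈ D, lam0 z ≤ M)
    (hlap0 : ∀ z ∈ D, lap (fun w => Real.log (lam0 w)) z = 4 * lam0 z ^ 2)
    (hle : ∀ z ∈ D, lam z ≤ lam0 z) :
    ∀ z ∈ D,
      ((8 * M ^ 2 * Real.log (lam z / lam0 z) : ℝ) : EReal) ≤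
        genLap (fun w => ((Real.log (lam w / lam0 w) : ℝ) : EReal)) z := by
  intro z hz
  have hlz : 0 < lam z := hlam_pos z hz
  have hl0 : 0 < lam0 z := hlam0_pos z hz
  have hlzle : lam z ≤ lam0 z := hle z hz
  have hl0M : lam0 z ≤ M := hlam0_le z hz
  have hvC2 : ContDiffOn ℝ 2 (fun w => Real.log (lam0 w)) D :=
    hC2.log (fun x hx => ne_of_gt (hlam0_pos x hx))
  rw [genLap]
  have hf := hlap z hz
  rw [genLap] at hf
  have hLf := ereal_le_of_four_mul hf
  have hlapv : fderiv ℝ (fderiv ℝ (fun w => Real.log (lam0 w))) z 1 1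
      + fderiv ℝ (fderiv ℝ (fun w => Real.log (lam0 w))) z Complex.I Complex.I
      = 4 * lam0 z ^ 2 := by
    rw [← lap_eq (fun w => Real.log (lam0 w)) hDopen hvC2 hz]
    exact hlap0 z hz
  obtain ⟨δ, hδpos, hδball⟩ := Metric.isOpen_iff.1 hDopen z hz
  have hmemD : ∀ r : ℝ, 0 < r → r < δ →
      ∀ θ : ℝ, z + r * Complex.exp (θ * Complex.I) ∈ D := by
    intro r hr hrδ θ
    apply hδball
    simp only [Metric.mem_ball, dist_eq_norm, add_sub_cancel_left, norm_mul]
    rw [Complex.norm_exp_ofReal_mul_I, mul_one,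
      Complex.norm_real, Real.norm_eq_abs, abs_of_pos hr]
    exact hrδ
  have hALL : ∀ ε : ℝ, 0 < ε →
      ((lam z ^ 2 - lam0 z ^ 2 - ε : ℝ) : EReal) ≤ Filter.liminf
        (fun r : ℝ => (((r ^ 2)⁻¹ : ℝ) : EReal) *
          (circleMean (fun w => ((Real.log (lam w / lam0 w) : ℝ) : EReal)) z r
            - ((Real.log (lam z / lam0 z) : ℝ) : EReal)))
        (nhdsWithin 0 (Set.Ioi 0)) := by
    intro ε hε
    set ε' := ε / 2 with hε'def
    have hε'pos : 0 < ε' := by positivity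
    have hmu := mean_upper (fun w => Real.log (lam0 w)) hDopen hvC2 hz hε'pos
    beta_reduce at hmu
    have hev_c := eventually_lt_of_lt_liminf (lt_of_lt_of_le
      (show ((lam z ^ 2 - ε' : ℝ) : EReal) < ((lam z ^ 2 : ℝ) : EReal) from
        EReal.coe_lt_coe_iff.2 (by linarith)) hLf)
    have hev : ∀ᶠ r : ℝ in nhdsWithin 0 (Set.Ioi 0),
        ((lam z ^ 2 - lam0 z ^ 2 - ε : ℝ) : EReal) ≤ (((r ^ 2)⁻¹ : ℝ) : EReal) *
          (circleMean (fun w => ((Real.log (lam w / lam0 w) : ℝ) : EReal)) z r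
            - ((Real.log (lam z / lam0 z) : ℝ) : EReal)) := by
      filter_upwards [hmu, hev_c,
        Ioo_mem_nhdsGT_of_mem (Set.mem_Ico.2 ⟨le_refl (0:ℝ), hδpos⟩),
        self_mem_nhdsWithin] with r hmu_r hc_r hrIoo hrpos
      have hr0 : (0:ℝ) < r := hrpos
      have hrδ : r < δ := hrIoo.2
      have hq : (0:ℝ) < (r ^ 2)⁻¹ := by positivity
      have hπ := Real.pi_pos
      have hsplit := split_ineq D hDopen lam lam0 M husc hlam_pos hlam_le hle hlam0_pos
        hC2.continuousOn z r hr0 (hmemD r hr0 hrδ)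
      set m := (2*Real.pi)⁻¹ * ∫ θ in Set.Ioc (0:ℝ) (2*Real.pi),
          Real.log (lam0 (z + r * Complex.exp (θ * Complex.I))) with hm
      rw [hlapv] at hmu_r
      have hm1 : m ≤ Real.log (lam0 z) + r^2 * lam0 z^2 + r^2*ε'/2 := by
        rw [hm]
        calc (2*Real.pi)⁻¹ * ∫ θ in Set.Ioc (0:ℝ) (2*Real.pi),
              Real.log (lam0 (z + r * Complex.exp (θ * Complex.I)))
            ≤ (2*Real.pi)⁻¹ * (2*Real.pi * Real.log (lam0 z)
                + r^2*Real.pi*(4*lam0 z^2)/2 + r^2*Real.pi*ε') :=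
              mul_le_mul_of_nonneg_left hmu_r (by positivity)
          _ = Real.log (lam0 z) + r^2 * lam0 z^2 + r^2*ε'/2 := by
              field_simp
              ring
      have ht : (r^2)⁻¹ * (m - Real.log (lam0 z)) ≤ lam0 z^2 + ε' := by
        have h3 : m - Real.log (lam0 z) ≤ r^2 * (lam0 z^2 + ε'/2) := by nlinarith [hm1]
        calc (r^2)⁻¹ * (m - Real.log (lam0 z))
            ≤ (r^2)⁻¹ * (r^2 * (lam0 z^2 + ε'/2)) :=
              mul_le_mul_of_nonneg_left h3 (le_of_lt hq)
          _ = lam0 z^2 + ε'/2 := by field_simp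
          _ ≤ lam0 z^2 + ε' := by linarith
      have hgoal := per_r_bound hq
        (circleMean (fun w => ((Real.log (lam w) : ℝ) : EReal)) z r)
        (circleMean (fun w => ((Real.log (lam w / lam0 w) : ℝ) : EReal)) z r)
        hsplit hc_r ht
      rw [show Real.log (lam z) - Real.log (lam0 z) = Real.log (lam z / lam0 z) from
        (Real.log_div (ne_of_gt hlz) (ne_of_gt hl0)).symm] at hgoal
      rw [show lam z^2 - lam0 z^2 - 2*ε' = lam z^2 - lam0 z^2 - ε from by
        rw [hε'def]; ring] at hgoal
      exact hgoal
    exact le_liminf_of_le (by isBoundedDefault) hev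
  have hkey2 := ereal_le_of_forall_eps hALL
  have helem := elem_ineq hlz hlzle hl0M
  have hfinal : ((2*M^2*Real.log (lam z / lam0 z) : ℝ) : EReal) ≤ Filter.liminf
      (fun r : ℝ => (((r ^ 2)⁻¹ : ℝ) : EReal) *
        (circleMean (fun w => ((Real.log (lam w / lam0 w) : ℝ) : EReal)) z r
          - ((Real.log (lam z / lam0 z) : ℝ) : EReal)))
      (nhdsWithin 0 (Set.Ioi 0)) :=
    le_trans (EReal.coe_le_coe_iff.2 (by linarith)) hkey2
  rw [show (8*M^2*Real.log (lam z / lam0 z) : ℝ)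
    = 4*(2*M^2*Real.log (lam z / lam0 z)) from by ring]
  exact ereal_four_mul_le hfinal
end

section
/- The supremum of |∫_𝔻 ( \overline{z}/|z| ) · ω(z)² dA(z)|, taken over all holomorphic functions ω on the open unit disk 𝔻 satisfying ∫_𝔻 |ω(z)|² dA(z) = 1, equals 2√2/3. (Here the integrand is defined to be 0 at z = 0.) -/
open Metric MeasureTheory Set Complex
open scoped Real

noncomputable section

namespace BeltramiProof

lemma circle_avg {f : ℂ → ℂ} (hf : DifferentiableOn ℂ f (ball (0:ℂ) 1))
    {r : ℝ} (hr : 0 < r) (hr1 : r < 1) :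
    (∫ θ in (0:ℝ)..(2*π), f (circleMap 0 r θ)) = (2*π : ℝ) • f 0 := by
  have hd : DifferentiableOn ℂ f (closedBall (0:ℂ) r) :=
    hf.mono (closedBall_subset_ball (by simpa using hr1))
  have key := hd.circleIntegral_sub_inv_smul (w := 0) (mem_ball_self hr)
  rw [circleIntegral] at key
  have h1 : ∀ θ ∈ Set.uIcc (0:ℝ) (2*π),
      deriv (circleMap 0 r) θ • ((circleMap 0 r θ - 0)⁻¹ • f (circleMap 0 r θ))
      = I * f (circleMap 0 r θ) := by
    intro θ _
    have hne : circleMap 0 r θ ≠ 0 := circleMap_ne_center hr.ne'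
    rw [deriv_circleMap, smul_eq_mul, smul_eq_mul, sub_zero]
    field_simp
  rw [intervalIntegral.integral_congr h1, intervalIntegral.integral_const_mul] at key
  have : I * ∫ θ in (0:ℝ)..(2*π), f (circleMap 0 r θ) = I * ((2*π : ℝ) • f 0) := by
    rw [key, smul_eq_mul, real_smul]
    push_cast
    ring
  exact mul_left_cancel₀ I_ne_zero this

lemma circle_coeff1 {f : ℂ → ℂ} (hf : DifferentiableOn ℂ f (ball (0:ℂ) 1))
    {r : ℝ} (hr : 0 < r) (hr1 : r < 1) :
    (∫ θ in (0:ℝ)..(2*π), Complex.exp (-(θ * I)) * f (circleMap 0 r θ))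
      = ((2*π*r : ℝ)) • deriv f 0 := by
  set g := dslope f 0 with hg
  have hgd : DifferentiableOn ℂ g (ball (0:ℂ) 1) :=
    (differentiableOn_dslope (isOpen_ball.mem_nhds (by simp))).mpr hf
  have havg := circle_avg hgd hr hr1
  have hmem : ∀ θ : ℝ, circleMap 0 r θ ∈ ball (0:ℂ) 1 := fun θ => by
    simp [mem_ball, norm_circleMap_zero, abs_of_pos hr, hr1]
  have hfg : ∀ θ ∈ Set.uIcc (0:ℝ) (2*π), Complex.exp (-(θ*I)) * f (circleMap 0 r θ)
      = Complex.exp (-(θ*I)) * f 0 + (r:ℝ) • g (circleMap 0 r θ) := by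
    intro θ _
    have h := sub_smul_dslope f 0 (circleMap 0 r θ)
    rw [sub_zero, smul_eq_mul, ← hg] at h
    have hfc : f (circleMap 0 r θ) = f 0 + circleMap 0 r θ * g (circleMap 0 r θ) := by
      rw [h]; ring
    rw [hfc, circleMap_zero, mul_add, real_smul]
    congr 1
    rw [show Complex.exp (-(θ*I)) * ((r:ℂ) * Complex.exp (θ*I) * g ((r:ℂ) * Complex.exp (θ*I)))
      = (Complex.exp (-(θ*I)) * Complex.exp (θ*I)) * ((r:ℂ) * g ((r:ℂ) * Complex.exp (θ*I))) by ring,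
      ← Complex.exp_add]
    simp [circleMap_zero]
  rw [intervalIntegral.integral_congr hfg]
  have hint1 : IntervalIntegrable (fun θ : ℝ => Complex.exp (-(θ*I)) * f 0) volume 0 (2*π) := by
    apply Continuous.intervalIntegrable
    exact (Complex.continuous_exp.comp (by continuity)).mul continuous_const
  have hint2 : IntervalIntegrable (fun θ : ℝ => (r:ℝ) • g (circleMap 0 r θ)) volume 0 (2*π) := by
    apply Continuous.intervalIntegrable
    exact (hgd.continuousOn.comp_continuous (continuous_circleMap 0 r) hmem).const_smul (r:ℝ)
  rw [intervalIntegral.integral_add hint1 hint2]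
  have hzero : (∫ θ in (0:ℝ)..(2*π), Complex.exp (-(θ*I)) * f 0) = 0 := by
    rw [intervalIntegral.integral_mul_const]
    have : (∫ θ in (0:ℝ)..(2*π), Complex.exp (-(θ*I)))
        = ∫ θ in (0:ℝ)..(2*π), Complex.exp ((-I) * θ) := by
      apply intervalIntegral.integral_congr
      intro θ _; ring_nf
    rw [this, integral_exp_mul_complex (by simp [I_ne_zero])]
    rw [show (-I) * ((2:ℝ)*π : ℝ) = -(2*π*I) by push_cast; ring]
    simp [Complex.exp_neg, Complex.exp_two_pi_mul_I]
  rw [hzero, intervalIntegral.integral_smul, havg, zero_add, hg, dslope_same, smul_smul]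
  congr 1
  ring

end BeltramiProof

namespace BeltramiProof

lemma polar_symm_eq_circleMap (r θ : ℝ) :
    Complex.polarCoord.symm (r, θ) = circleMap 0 r θ := by
  rw [Complex.polarCoord_symm_apply, circleMap_zero, Complex.exp_mul_I,
    ← Complex.ofReal_cos, ← Complex.ofReal_sin]

lemma real_polar_symm (p : ℝ × ℝ) :
    Complex.measurableEquivRealProd.symm (polarCoord.symm p) = circleMap 0 p.1 p.2 := by
  rw [← polar_symm_eq_circleMap p.1 p.2, Complex.polarCoord_symm_apply,
    polarCoord_symm_apply, Complex.measurableEquivRealProd_symm_apply]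
  rw [Complex.mk_eq_add_mul_I]
  push_cast
  ring

def Bmat (p : ℝ × ℝ) : ℝ × ℝ →L[ℝ] ℝ × ℝ :=
  LinearMap.toContinuousLinearMap (Matrix.toLin (Module.Basis.finTwoProd ℝ) (Module.Basis.finTwoProd ℝ)
    !![Real.cos p.2, -p.1 * Real.sin p.2; Real.sin p.2, p.1 * Real.cos p.2])

lemma Bmat_det (p : ℝ × ℝ) : (Bmat p).det = p.1 := by
  conv_rhs => rw [← one_mul p.1, ← Real.cos_sq_add_sin_sq p.2]
  simp only [Bmat, neg_mul, LinearMap.det_toContinuousLinearMap, LinearMap.det_toLin,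
    Matrix.det_fin_two_of, sub_neg_eq_add]
  ring

lemma polar_ball {E : Type*} [NormedAddCommGroup E] [NormedSpace ℝ E]
    (F : ℂ → E) (hF : IntegrableOn F (ball (0:ℂ) 1)) :
    IntegrableOn (fun p : ℝ × ℝ => p.1 • F (circleMap 0 p.1 p.2))
        (Ioo (0:ℝ) 1 ×ˢ Ioo (-π) π) ∧
      (∫ z in ball (0:ℂ) 1, F z)
        = ∫ r in Ioo (0:ℝ) 1, ∫ θ in Ioo (-π) π, r • F (circleMap 0 r θ) := by
  have hs : MeasurableSet (Ioo (0:ℝ) 1 ×ˢ Ioo (-π) π) :=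
    measurableSet_Ioo.prod measurableSet_Ioo
  set g : ℝ × ℝ → E := fun q => F (Complex.measurableEquivRealProd.symm q) with hg_def
  have hgD : IntegrableOn g (Complex.measurableEquivRealProd.symm ⁻¹' ball (0:ℂ) 1) := by
    rw [hg_def]
    exact ((Complex.volume_preserving_equiv_real_prod.symm _).integrableOn_comp_preimage
      (MeasurableEquiv.measurableEmbedding _)).mpr hF
  have hder : ∀ p ∈ Ioo (0:ℝ) 1 ×ˢ Ioo (-π) π,
      HasFDerivWithinAt polarCoord.symm (Bmat p) (Ioo (0:ℝ) 1 ×ˢ Ioo (-π) π) p := fun p _ =>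
    (hasFDerivAt_polarCoord_symm p).hasFDerivWithinAt
  have hsub : Ioo (0:ℝ) 1 ×ˢ Ioo (-π) π ⊆ polarCoord.symm.source := by
    rw [OpenPartialHomeomorph.symm_source, polarCoord_target]
    exact Set.prod_mono Ioo_subset_Ioi_self subset_rfl
  have hinj : Set.InjOn polarCoord.symm (Ioo (0:ℝ) 1 ×ˢ Ioo (-π) π) :=
    polarCoord.symm.injOn.mono hsub
  have himg : polarCoord.symm '' (Ioo (0:ℝ) 1 ×ˢ Ioo (-π) π)
      ⊆ Complex.measurableEquivRealProd.symm ⁻¹' ball (0:ℂ) 1 := by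
    rintro q ⟨p, hp, rfl⟩
    simp only [Set.mem_preimage, mem_ball, dist_zero_right, real_polar_symm,
      norm_circleMap_zero]
    rw [abs_of_pos hp.1.1]
    exact hp.1.2
  have hGs : IntegrableOn (fun p : ℝ × ℝ => p.1 • g (polarCoord.symm p))
      (Ioo (0:ℝ) 1 ×ˢ Ioo (-π) π) := by
    have h0 := (integrableOn_image_iff_integrableOn_abs_det_fderiv_smul volume hs hder hinj g).mp
      (hgD.mono_set himg)
    apply h0.congr_fun ?_ hs
    intro p hp
    simp only
    rw [Bmat_det, abs_of_pos hp.1.1]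
  have hGs' : IntegrableOn (fun p : ℝ × ℝ => p.1 • F (circleMap 0 p.1 p.2))
      (Ioo (0:ℝ) 1 ×ˢ Ioo (-π) π) := by
    apply hGs.congr_fun ?_ hs
    intro p _
    simp only [hg_def, real_polar_symm]
  refine ⟨hGs', ?_⟩
  have key := Complex.integral_comp_polarCoord_symm (Set.indicator (ball (0:ℂ) 1) F)
  rw [integral_indicator measurableSet_ball] at key
  rw [← key]
  have hts : polarCoord.target ∩ (Ioo (0:ℝ) 1 ×ˢ Ioo (-π) π) = Ioo (0:ℝ) 1 ×ˢ Ioo (-π) π := by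
    apply Set.inter_eq_self_of_subset_right
    rw [polarCoord_target]
    exact Set.prod_mono Ioo_subset_Ioi_self subset_rfl
  have step1 : (∫ p in polarCoord.target,
        p.1 • Set.indicator (ball (0:ℂ) 1) F (Complex.polarCoord.symm p))
      = ∫ p in Ioo (0:ℝ) 1 ×ˢ Ioo (-π) π, p.1 • F (circleMap 0 p.1 p.2) := by
    rw [← hts, ← setIntegral_indicator hs]
    apply setIntegral_congr_fun polarCoord.open_target.measurableSet
    intro p hp
    rw [polarCoord_target] at hp
    have hcm : Complex.polarCoord.symm p = circleMap 0 p.1 p.2 :=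
      polar_symm_eq_circleMap p.1 p.2
    have habs : ‖Complex.polarCoord.symm p‖ = p.1 := by
      rw [hcm, norm_circleMap_zero, abs_of_pos hp.1]
    by_cases h1 : p.1 < 1
    · have hmem : p ∈ Ioo (0:ℝ) 1 ×ˢ Ioo (-π) π := ⟨⟨hp.1, h1⟩, hp.2⟩
      have hball : Complex.polarCoord.symm p ∈ ball (0:ℂ) 1 := by
        simp only [mem_ball, dist_zero_right, habs]
        exact h1
      simp only [hcm,
        Set.indicator_of_mem (show circleMap 0 p.1 p.2 ∈ ball (0:ℂ) 1 from hcm ▸ hball),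
        Set.indicator_of_mem hmem]
    · have hnmem : p ∉ Ioo (0:ℝ) 1 ×ˢ Ioo (-π) π := fun hc => h1 hc.1.2
      have hnball : Complex.polarCoord.symm p ∉ ball (0:ℂ) 1 := by
        simp only [mem_ball, dist_zero_right, habs]
        exact h1
      simp only [Set.indicator_of_notMem hnball, Set.indicator_of_notMem hnmem, smul_zero]
  rw [step1]
  rw [Measure.volume_eq_prod] at hGs' ⊢
  exact setIntegral_prod _ hGs'

end BeltramiProof

namespace BeltramiProof

lemma ioo_to_circle {E : Type*} [NormedAddCommGroup E] [NormedSpace ℝ E]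
    {f : ℝ → E} (hper : Function.Periodic f (2*π)) :
    (∫ θ in Ioo (-π) π, f θ) = ∫ θ in (0:ℝ)..(2*π), f θ := by
  have hle : (-π : ℝ) ≤ π := by linarith [Real.pi_pos]
  rw [← integral_Ioc_eq_integral_Ioo, ← intervalIntegral.integral_of_le hle]
  have h := hper.intervalIntegral_add_eq (-π) 0
  rw [show -π + 2*π = π by ring, zero_add] at h
  exact h

lemma intervalIntegral_re {a b : ℝ} {h : ℝ → ℂ} (hab : a ≤ b)
    (hi : IntervalIntegrable h volume a b) :
    (∫ x in a..b, h x).re = ∫ x in a..b, (h x).re := by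
  rw [intervalIntegral.integral_of_le hab, intervalIntegral.integral_of_le hab]
  have := integral_re ((intervalIntegrable_iff_integrableOn_Ioc_of_le hab).mp hi)
  simpa using this.symm

lemma norm_sub_sq_complex (u v : ℂ) :
    ‖u - v‖^2 = ‖u‖^2 - 2*((starRingEnd ℂ) v * u).re + ‖v‖^2 := by
  simp only [Complex.sq_norm, Complex.normSq_apply, Complex.sub_re,
    Complex.sub_im, Complex.mul_re, Complex.conj_re, Complex.conj_im]
  ring

lemma conj_mul_self (z : ℂ) : (starRingEnd ℂ) z * z = ((‖z‖^2 : ℝ) : ℂ) := by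
  rw [mul_comm, Complex.mul_conj, Complex.normSq_eq_norm_sq]

lemma circle_bessel {f : ℂ → ℂ} (hf : DifferentiableOn ℂ f (ball (0:ℂ) 1))
    {r : ℝ} (hr : 0 < r) (hr1 : r < 1) :
    2*π*(‖f 0‖^2 + r^2 * ‖deriv f 0‖^2) ≤ ∫ θ in (0:ℝ)..(2*π), ‖f (circleMap 0 r θ)‖^2 := by
  have h2π : (0:ℝ) ≤ 2*π := by positivity
  set a := f 0 with ha
  set b := deriv f 0 with hb
  set S : ℝ := ‖a‖^2 + r^2*‖b‖^2 with hS
  have hmem : ∀ θ : ℝ, circleMap 0 r θ ∈ ball (0:ℂ) 1 := fun θ => by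
    simp [mem_ball, norm_circleMap_zero, abs_of_pos hr, hr1]
  have hcont : Continuous fun θ : ℝ => f (circleMap 0 r θ) :=
    hf.continuousOn.comp_continuous (continuous_circleMap 0 r) hmem
  have h1 := circle_avg hf hr hr1
  have h2 := circle_coeff1 hf hr hr1
  rw [← ha] at h1
  rw [← hb] at h2
  have hconj : ∀ θ : ℝ, (starRingEnd ℂ) (circleMap 0 r θ) = (r:ℂ) * Complex.exp (-(θ*I)) := by
    intro θ
    rw [circleMap_zero, map_mul, Complex.conj_ofReal, ← Complex.exp_conj]
    congr 1
    simp [Complex.conj_ofReal]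
  have hPc : ∀ θ : ℝ, (starRingEnd ℂ) (a + b * circleMap 0 r θ) * f (circleMap 0 r θ)
      = (starRingEnd ℂ) a * f (circleMap 0 r θ)
        + (starRingEnd ℂ) b * ((r:ℂ) * (Complex.exp (-(θ*I)) * f (circleMap 0 r θ))) := by
    intro θ
    rw [map_add, map_mul, hconj]
    ring
  have hint_f : IntervalIntegrable (fun θ => f (circleMap 0 r θ)) volume 0 (2*π) :=
    hcont.intervalIntegrable 0 (2*π)
  have hint_e : IntervalIntegrable (fun θ => Complex.exp (-(θ*I)) * f (circleMap 0 r θ))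
      volume 0 (2*π) := by
    apply Continuous.intervalIntegrable
    exact (Complex.continuous_exp.comp (by continuity)).mul hcont
  have hcross : (∫ θ in (0:ℝ)..(2*π), (starRingEnd ℂ) (a + b * circleMap 0 r θ)
      * f (circleMap 0 r θ)) = ((2*π*S : ℝ) : ℂ) := by
    rw [intervalIntegral.integral_congr (fun θ _ => hPc θ),
      intervalIntegral.integral_add (hint_f.const_mul _)
        ((hint_e.const_mul ((r:ℂ))).const_mul _),
      intervalIntegral.integral_const_mul, intervalIntegral.integral_const_mul,
      intervalIntegral.integral_const_mul, h1, h2]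
    have haa := conj_mul_self a
    have hbb := conj_mul_self b
    rw [hS]
    rw [Complex.real_smul, Complex.real_smul]
    push_cast at haa hbb ⊢
    linear_combination (2*(π:ℂ)) * haa + ((r:ℂ)^2*2*(π:ℂ)) * hbb
  -- the integral of the comparison polynomial
  have hid : DifferentiableOn ℂ (fun z : ℂ => z) (ball (0:ℂ) 1) :=
    differentiable_id.differentiableOn
  have h0 := circle_avg hid hr hr1
  simp only [smul_zero] at h0
  have hintc : IntervalIntegrable
      (fun θ : ℝ => ((starRingEnd ℂ) a * (b * circleMap 0 r θ)).re) volume 0 (2*π) := by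
    apply Continuous.intervalIntegrable
    exact Complex.continuous_re.comp
      (continuous_const.mul (continuous_const.mul (continuous_circleMap 0 r)))
  have hPnorm : (∫ θ in (0:ℝ)..(2*π), ‖a + b * circleMap 0 r θ‖^2) = 2*π*S := by
    have hpt : ∀ θ ∈ Set.uIcc (0:ℝ) (2*π), ‖a + b * circleMap 0 r θ‖^2
        = S + 2*((starRingEnd ℂ) a * (b * circleMap 0 r θ)).re := by
      intro θ _
      have hexp := norm_sub_sq_complex (a + b * circleMap 0 r θ) a
      simp only [add_sub_cancel_left] at hexp
      have hba : ‖b * circleMap 0 r θ‖^2 = r^2*‖b‖^2 := by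
        rw [norm_mul]
        simp only [norm_circleMap_zero, abs_of_pos hr]
        ring
      have heq : ((starRingEnd ℂ) a * (a + b * circleMap 0 r θ)).re
          = ‖a‖^2 + ((starRingEnd ℂ) a * (b * circleMap 0 r θ)).re := by
        rw [mul_add, Complex.add_re, conj_mul_self, Complex.ofReal_re]
      rw [heq] at hexp
      rw [hS]
      nlinarith [hexp, hba]
    rw [intervalIntegral.integral_congr hpt,
      intervalIntegral.integral_add intervalIntegrable_const (hintc.const_mul 2),
      intervalIntegral.integral_const_mul, intervalIntegral.integral_const]
    have hcc : Continuous fun θ : ℝ => (starRingEnd ℂ) a * (b * circleMap 0 r θ) :=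
      continuous_const.mul (continuous_const.mul (continuous_circleMap 0 r))
    have hB0 : (∫ θ in (0:ℝ)..(2*π), ((starRingEnd ℂ) a * (b * circleMap 0 r θ)).re) = 0 := by
      rw [← intervalIntegral_re h2π (hcc.intervalIntegrable 0 (2*π))]
      have hcm : (∫ θ in (0:ℝ)..(2*π), (starRingEnd ℂ) a * (b * circleMap 0 r θ))
          = (starRingEnd ℂ) a * b * ∫ θ in (0:ℝ)..(2*π), circleMap 0 r θ := by
        rw [← intervalIntegral.integral_const_mul]
        apply intervalIntegral.integral_congr
        intro θ _
        ring
      rw [hcm, h0, mul_zero, Complex.zero_re]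
    rw [hB0]
    simp [smul_eq_mul]
  -- Bessel
  have hA : IntervalIntegrable (fun θ : ℝ => ‖f (circleMap 0 r θ)‖^2) volume 0 (2*π) :=
    ((hcont.norm.pow 2)).intervalIntegrable 0 (2*π)
  have hPcont : Continuous fun θ : ℝ => a + b * circleMap 0 r θ :=
    continuous_const.add (continuous_const.mul (continuous_circleMap 0 r))
  have hBcont : Continuous fun θ : ℝ =>
      ((starRingEnd ℂ) (a + b * circleMap 0 r θ) * f (circleMap 0 r θ)).re :=
    Complex.continuous_re.comp ((Complex.continuous_conj.comp hPcont).mul hcont)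
  have hCint : IntervalIntegrable (fun θ : ℝ => ‖a + b * circleMap 0 r θ‖^2) volume 0 (2*π) :=
    (hPcont.norm.pow 2).intervalIntegrable 0 (2*π)
  have hpos : 0 ≤ ∫ θ in (0:ℝ)..(2*π), ‖f (circleMap 0 r θ) - (a + b * circleMap 0 r θ)‖^2 :=
    intervalIntegral.integral_nonneg h2π (fun θ _ => sq_nonneg _)
  have hicross : IntervalIntegrable
      (fun θ : ℝ => (starRingEnd ℂ) (a + b * circleMap 0 r θ) * f (circleMap 0 r θ))
      volume 0 (2*π) := by
    apply Continuous.intervalIntegrable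
    exact (Complex.continuous_conj.comp hPcont).mul hcont
  have hBval := intervalIntegral_re h2π hicross
  rw [hcross, Complex.ofReal_re] at hBval
  have hX : (∫ θ in (0:ℝ)..(2*π), ‖f (circleMap 0 r θ) - (a + b * circleMap 0 r θ)‖^2)
      = (∫ θ in (0:ℝ)..(2*π), ‖f (circleMap 0 r θ)‖^2) - 2*(2*π*S) + 2*π*S := by
    rw [intervalIntegral.integral_congr
      (fun θ _ => norm_sub_sq_complex (f (circleMap 0 r θ)) (a + b * circleMap 0 r θ)),
      intervalIntegral.integral_add (hA.sub ((hBcont.intervalIntegrable 0 (2*π)).const_mul 2))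
        hCint,
      intervalIntegral.integral_sub hA ((hBcont.intervalIntegrable 0 (2*π)).const_mul 2),
      intervalIntegral.integral_const_mul, hPnorm, ← hBval]
  linarith [hpos, hX]

end BeltramiProof

namespace BeltramiProof

lemma mu_circle {r : ℝ} (hr : 0 < r) (θ : ℝ) :
    (starRingEnd ℂ) (circleMap 0 r θ) / ((‖circleMap 0 r θ‖ : ℝ) : ℂ)
      = Complex.exp (-(θ*I)) := by
  have habs : (‖circleMap 0 r θ‖ : ℝ) = r := by
    rw [norm_circleMap_zero, abs_of_pos hr]
  rw [habs, circleMap_zero, map_mul, Complex.conj_ofReal, ← Complex.exp_conj,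
    show (starRingEnd ℂ) (↑θ * I) = -(↑θ*I) by simp [Complex.conj_ofReal],
    mul_comm ((r:ℂ)) _, mul_div_assoc, div_self (Complex.ofReal_ne_zero.mpr hr.ne'), mul_one]

lemma pairing_formula {ω : ℂ → ℂ} (hω : DifferentiableOn ℂ ω (ball (0:ℂ) 1))
    (hInt : IntegrableOn (fun z => ‖ω z‖^2) (ball (0:ℂ) 1)) :
    (∫ z in ball (0:ℂ) 1, (starRingEnd ℂ) z / (‖z‖ : ℂ) * ω z ^ 2)
      = ((4*π/3 : ℝ)) • (ω 0 * deriv ω 0) := by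
  have hmeasω : AEMeasurable ω (volume.restrict (ball (0:ℂ) 1)) :=
    hω.continuousOn.aemeasurable measurableSet_ball
  have hmeasμ : Measurable fun z : ℂ => (starRingEnd ℂ) z / ((‖z‖ : ℝ) : ℂ) := by
    apply Measurable.div
    · exact Complex.continuous_conj.measurable
    · exact (Complex.continuous_ofReal.comp continuous_norm).measurable
  have hFmeas : AEStronglyMeasurable
      (fun z => (starRingEnd ℂ) z / (‖z‖ : ℂ) * ω z ^ 2)
      (volume.restrict (ball (0:ℂ) 1)) :=
    (hmeasμ.aemeasurable.mul (hmeasω.pow_const 2)).aestronglyMeasurable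
  have hbound : ∀ z : ℂ, ‖(starRingEnd ℂ) z / (‖z‖ : ℂ) * ω z ^ 2‖ ≤ ‖ω z‖^2 := by
    intro z
    rw [norm_mul, norm_pow]
    rcases eq_or_ne z 0 with rfl | hz
    · simp
    · have h1 : ‖(starRingEnd ℂ) z / (‖z‖ : ℂ)‖ = 1 := by
        rw [norm_div]
        simp only [Complex.norm_conj, Complex.norm_real, Real.norm_eq_abs]
        rw [_root_.abs_of_nonneg (norm_nonneg z)]
        exact div_self (norm_ne_zero_iff.mpr hz)
      rw [h1, one_mul]
  have hFint : IntegrableOn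
      (fun z => (starRingEnd ℂ) z / (‖z‖ : ℂ) * ω z ^ 2) (ball (0:ℂ) 1) :=
    Integrable.mono' hInt hFmeas (ae_of_all _ hbound)
  obtain ⟨hGs, hpolar⟩ := polar_ball _ hFint
  rw [hpolar]
  have hω2 : DifferentiableOn ℂ (fun z => ω z ^ 2) (ball (0:ℂ) 1) := hω.pow 2
  have hd0 : deriv (fun z => ω z ^ 2) 0 = 2 * ω 0 * deriv ω 0 := by
    have h0 : DifferentiableAt ℂ ω 0 := hω.differentiableAt (isOpen_ball.mem_nhds (by simp))
    rw [show (fun z => ω z ^ 2) = ω ^ 2 from rfl, (h0.hasDerivAt.pow 2).deriv]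
    simp

  have hinner : ∀ r ∈ Ioo (0:ℝ) 1,
      (∫ θ in Ioo (-π) π, r • ((starRingEnd ℂ) (circleMap 0 r θ)
        / ((‖circleMap 0 r θ‖ : ℝ) : ℂ) * ω (circleMap 0 r θ) ^ 2))
      = ((4*π*r^2 : ℝ)) • (ω 0 * deriv ω 0) := by
    intro r hr
    have hper : Function.Periodic (fun θ : ℝ => (r:ℝ) • ((starRingEnd ℂ) (circleMap 0 r θ)
        / ((‖circleMap 0 r θ‖ : ℝ) : ℂ) * ω (circleMap 0 r θ) ^ 2)) (2*π) := by
      intro θ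
      simp only [(periodic_circleMap 0 r) θ]
    rw [ioo_to_circle hper, intervalIntegral.integral_smul,
      intervalIntegral.integral_congr (fun θ _ => by rw [mu_circle hr.1 θ]),
      circle_coeff1 hω2 hr.1 hr.2, hd0, smul_smul, Complex.real_smul, Complex.real_smul]
    push_cast
    ring
  rw [setIntegral_congr_fun measurableSet_Ioo hinner, integral_smul_const]
  congr 1
  rw [← integral_Ioc_eq_integral_Ioo, ← intervalIntegral.integral_of_le zero_le_one]
  have : ∀ r ∈ Set.uIcc (0:ℝ) 1, (4*π*r^2 : ℝ) = (4*π) * r^2 := fun r _ => by ring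
  rw [intervalIntegral.integral_congr this, intervalIntegral.integral_const_mul, integral_pow]
  norm_num
  ring

lemma norm_lower {ω : ℂ → ℂ} (hω : DifferentiableOn ℂ ω (ball (0:ℂ) 1))
    (hInt : IntegrableOn (fun z => ‖ω z‖^2) (ball (0:ℂ) 1)) :
    π*‖ω 0‖^2 + π/2*‖deriv ω 0‖^2 ≤ ∫ z in ball (0:ℂ) 1, ‖ω z‖^2 := by
  obtain ⟨hGs, hpolar⟩ := polar_ball (fun z => ‖ω z‖^2) hInt
  rw [hpolar]
  rw [Measure.volume_eq_prod] at hGs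
  rw [IntegrableOn, ← Measure.prod_restrict] at hGs
  have hrad : IntegrableOn
      (fun r : ℝ => ∫ θ in Ioo (-π) π, r • ‖ω (circleMap 0 r θ)‖^2) (Ioo (0:ℝ) 1) := by
    have := hGs.integral_prod_left
    simpa [IntegrableOn] using this
  set A := ‖ω 0‖^2 with hA
  set B := ‖deriv ω 0‖^2 with hB
  have hℓcont : Continuous (fun r : ℝ => r * (2*π*(A + r^2*B))) := by continuity
  have hℓint : IntegrableOn (fun r : ℝ => r * (2*π*(A + r^2*B))) (Ioo (0:ℝ) 1) :=
    (hℓcont.continuousOn.integrableOn_compact isCompact_Icc).mono_set Ioo_subset_Icc_self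
  have hmono : ∀ r ∈ Ioo (0:ℝ) 1, r * (2*π*(A + r^2*B))
      ≤ ∫ θ in Ioo (-π) π, r • ‖ω (circleMap 0 r θ)‖^2 := by
    intro r hr
    have hper : Function.Periodic (fun θ : ℝ => (r:ℝ) • ‖ω (circleMap 0 r θ)‖^2) (2*π) := by
      intro θ
      simp only [(periodic_circleMap 0 r) θ]
    rw [ioo_to_circle hper, intervalIntegral.integral_smul, smul_eq_mul]
    exact mul_le_mul_of_nonneg_left (circle_bessel hω hr.1 hr.2) hr.1.le
  have hval : (∫ r in Ioo (0:ℝ) 1, r * (2*π*(A + r^2*B))) = π*A + π/2*B := by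
    rw [← integral_Ioc_eq_integral_Ioo, ← intervalIntegral.integral_of_le zero_le_one]
    have hpt : ∀ r ∈ Set.uIcc (0:ℝ) 1, r * (2*π*(A + r^2*B))
        = (2*π*A) * r^1 + (2*π*B) * r^3 := fun r _ => by ring
    rw [intervalIntegral.integral_congr hpt,
      intervalIntegral.integral_add
        ((by fun_prop : Continuous fun r : ℝ => (2*π*A) * r^1).intervalIntegrable 0 1)
        ((by fun_prop : Continuous fun r : ℝ => (2*π*B) * r^3).intervalIntegrable 0 1),
      intervalIntegral.integral_const_mul, intervalIntegral.integral_const_mul,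
      integral_pow, integral_pow]
    norm_num
    ring
  calc π*A + π/2*B = ∫ r in Ioo (0:ℝ) 1, r * (2*π*(A + r^2*B)) := hval.symm
    _ ≤ _ := setIntegral_mono_on hℓint hrad measurableSet_Ioo hmono

end BeltramiProof

namespace BeltramiProof

lemma radial_poly_integral (A B : ℝ) :
    (∫ r in Ioo (0:ℝ) 1, r * (2*π*(A + r^2*B))) = π*A + π/2*B := by
  rw [← integral_Ioc_eq_integral_Ioo, ← intervalIntegral.integral_of_le zero_le_one]
  have hpt : ∀ r ∈ Set.uIcc (0:ℝ) 1, r * (2*π*(A + r^2*B))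
      = (2*π*A) * r^1 + (2*π*B) * r^3 := fun r _ => by ring
  rw [intervalIntegral.integral_congr hpt,
    intervalIntegral.integral_add
      ((by fun_prop : Continuous fun r : ℝ => (2*π*A) * r^1).intervalIntegrable 0 1)
      ((by fun_prop : Continuous fun r : ℝ => (2*π*B) * r^3).intervalIntegrable 0 1),
    intervalIntegral.integral_const_mul, intervalIntegral.integral_const_mul,
    integral_pow, integral_pow]
  norm_num
  ring

lemma circleMap_norm_sq (x y r θ : ℝ) :
    ‖(x:ℂ) + (y:ℂ) * circleMap 0 r θ‖^2
      = (x^2 + y^2*r^2) + (2*x*y*r) * Real.cos θ := by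
  have hre : (circleMap 0 r θ).re = r * Real.cos θ := by
    simp [circleMap, Complex.exp_mul_I, Complex.cos_ofReal_re, Complex.sin_ofReal_re]
  have him : (circleMap 0 r θ).im = r * Real.sin θ := by
    simp [circleMap, Complex.exp_mul_I, Complex.cos_ofReal_re, Complex.sin_ofReal_re]
  have hpyth := Real.sin_sq_add_cos_sq θ
  simp only [Complex.sq_norm, Complex.normSq_apply, Complex.add_re,
    Complex.add_im, Complex.mul_re, Complex.mul_im, Complex.ofReal_re, Complex.ofReal_im,
    hre, him]
  linear_combination (y*r)^2 * hpyth

lemma witness_norm_one :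
    (∫ z in ball (0:ℂ) 1,
      ‖((Real.sqrt (2*π))⁻¹ : ℝ) + ((Real.sqrt π)⁻¹ : ℝ) * z‖^2) = 1 := by
  set a : ℝ := (Real.sqrt (2*π))⁻¹ with ha
  set b : ℝ := (Real.sqrt π)⁻¹ with hb
  have hc : Continuous fun z : ℂ => ‖(a:ℂ) + (b:ℂ) * z‖^2 :=
    ((continuous_const.add (continuous_const.mul continuous_id)).norm.pow 2)
  have hInt : IntegrableOn (fun z : ℂ => ‖(a:ℂ) + (b:ℂ) * z‖^2) (ball (0:ℂ) 1) :=
    (hc.continuousOn.integrableOn_compact (isCompact_closedBall 0 1)).mono_set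
      ball_subset_closedBall
  obtain ⟨_, hpolar⟩ := polar_ball (fun z : ℂ => ‖(a:ℂ) + (b:ℂ) * z‖^2) hInt
  rw [hpolar]
  have hinner : ∀ r ∈ Ioo (0:ℝ) 1,
      (∫ θ in Ioo (-π) π, r • ‖(a:ℂ) + (b:ℂ) * circleMap 0 r θ‖^2)
      = r * (2*π*(a^2 + r^2*b^2)) := by
    intro r _
    rw [integral_smul, smul_eq_mul]
    congr 1
    have hle : (-π : ℝ) ≤ π := by linarith [Real.pi_pos]
    rw [← integral_Ioc_eq_integral_Ioo, ← intervalIntegral.integral_of_le hle,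
      intervalIntegral.integral_congr (fun θ _ => circleMap_norm_sq a b r θ),
      intervalIntegral.integral_add (intervalIntegrable_const)
        ((by fun_prop : Continuous fun θ : ℝ => (2*a*b*r) * Real.cos θ).intervalIntegrable _ _),
      intervalIntegral.integral_const_mul, integral_cos]
    simp [smul_eq_mul]
    ring
  rw [setIntegral_congr_fun measurableSet_Ioo hinner, radial_poly_integral]
  have h2π : (0:ℝ) < 2*π := by positivity
  have hπ : (0:ℝ) < π := Real.pi_pos
  have ha2 : a^2 = (2*π)⁻¹ := by
    rw [ha, ← Real.sqrt_inv, Real.sq_sqrt (by positivity)]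
  have hb2 : b^2 = π⁻¹ := by
    rw [hb, ← Real.sqrt_inv, Real.sq_sqrt (by positivity)]
  rw [ha2, hb2]
  field_simp
  ring

theorem main_statement :
    IsLUB {r : ℝ | ∃ ω : ℂ → ℂ, DifferentiableOn ℂ ω (ball (0 : ℂ) 1) ∧
        (∫ z in ball (0 : ℂ) 1, ‖ω z‖ ^ 2) = 1 ∧
        r = ‖∫ z in ball (0 : ℂ) 1,
              ((starRingEnd ℂ) z / (‖z‖ : ℂ)) * ω z ^ 2‖}
      (2 * Real.sqrt 2 / 3) := by
  have hs2 : (Real.sqrt 2)^2 = 2 := Real.sq_sqrt (by norm_num)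
  have hs0 : (0:ℝ) < Real.sqrt 2 := Real.sqrt_pos.mpr (by norm_num)
  have hπ : (0:ℝ) < π := Real.pi_pos
  constructor
  · rintro t ⟨ω, hω, hnorm, rfl⟩
    have hInt : IntegrableOn (fun z => ‖ω z‖^2) (ball (0:ℂ) 1) := by
      by_contra h
      rw [MeasureTheory.integral_undef h] at hnorm
      exact one_ne_zero hnorm.symm
    rw [pairing_formula hω hInt]
    have hlow := norm_lower hω hInt
    rw [hnorm] at hlow
    rw [norm_smul, norm_mul, Real.norm_eq_abs, _root_.abs_of_pos (by positivity : (0:ℝ) < 4*π/3)]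
    set x := ‖ω 0‖
    set y := ‖deriv ω 0‖
    have hx : 0 ≤ x := norm_nonneg _
    have hy : 0 ≤ y := norm_nonneg _
    have expand : π*(x*Real.sqrt 2 - y)^2 = 2*π*x^2 - 2*(π*Real.sqrt 2*(x*y)) + π*y^2 := by
      linear_combination π * x^2 * hs2
    have key : π * Real.sqrt 2 * (x*y) ≤ 1 := by
      linarith [mul_nonneg hπ.le (sq_nonneg (x*Real.sqrt 2 - y)), expand, hlow]
    have key2 := mul_le_mul_of_nonneg_left key hs0.le
    have key3 : 2*π*(x*y) ≤ Real.sqrt 2 := by nlinarith [key2, hs2]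
    linarith
  · intro c hc
    apply hc
    set a : ℝ := (Real.sqrt (2*π))⁻¹ with ha
    set b : ℝ := (Real.sqrt π)⁻¹ with hb
    refine ⟨fun z : ℂ => (a:ℂ) + (b:ℂ) * z, ?_, witness_norm_one, ?_⟩
    · exact ((differentiable_const _).add (differentiable_id.const_mul _)).differentiableOn
    · have hdiff : DifferentiableOn ℂ (fun z : ℂ => (a:ℂ) + (b:ℂ) * z) (ball (0:ℂ) 1) :=
        ((differentiable_const _).add (differentiable_id.const_mul _)).differentiableOn
      have hc' : Continuous fun z : ℂ => ‖(a:ℂ) + (b:ℂ) * z‖^2 :=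
        ((continuous_const.add (continuous_const.mul continuous_id)).norm.pow 2)
      have hInt : IntegrableOn (fun z : ℂ => ‖(a:ℂ) + (b:ℂ) * z‖^2) (ball (0:ℂ) 1) :=
        (hc'.continuousOn.integrableOn_compact (isCompact_closedBall 0 1)).mono_set
          ball_subset_closedBall
      rw [pairing_formula hdiff hInt]
      have hval0 : (fun z : ℂ => (a:ℂ) + (b:ℂ) * z) 0 = (a:ℂ) := by simp
      have hder : deriv (fun z : ℂ => (a:ℂ) + (b:ℂ) * z) 0 = (b:ℂ) := by
        have h := ((hasDerivAt_id (0:ℂ)).const_mul ((b:ℂ))).const_add ((a:ℂ))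
        simpa using h.deriv
      simp only [mul_zero, add_zero, hder]
      rw [← Complex.ofReal_mul, norm_smul, Complex.norm_real, Real.norm_eq_abs,
        Real.norm_eq_abs]
      have hapos : 0 < a := by rw [ha]; positivity
      have hbpos : 0 < b := by rw [hb]; positivity
      rw [_root_.abs_of_pos (by positivity : (0:ℝ) < 4*π/3),
        _root_.abs_of_pos (mul_pos hapos hbpos)]
      have h2π : Real.sqrt (2*π) = Real.sqrt 2 * Real.sqrt π := Real.sqrt_mul (by norm_num) π
      have hsπ : (Real.sqrt π)^2 = π := Real.sq_sqrt hπ.le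
      have hsπ0 : (0:ℝ) < Real.sqrt π := Real.sqrt_pos.mpr hπ
      have hsπ' : Real.sqrt π * Real.sqrt π = π := Real.mul_self_sqrt hπ.le
      have hs2' : Real.sqrt 2 * Real.sqrt 2 = 2 := Real.mul_self_sqrt (by norm_num)
      rw [ha, hb, h2π, mul_inv]
      field_simp
      nlinarith [hsπ', hs2', hs0, hsπ0]

end BeltramiProof


open Metric MeasureTheory

/-- Equality (23) of the paper: the supremum of `|∫_𝔻 (z̄/|z|) ω(z)² dA(z)|`, over all
holomorphic `ω` on the unit disk with `∫_𝔻 |ω|² dA = 1`, equals `2√2/3`. (The integrand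
`z̄/|z| = |z|/z` for `z ≠ 0` is `0` at `z = 0`, which holds automatically in Lean.) -/
theorem sup_beltrami_pairing_eq :
    IsLUB {r : ℝ | ∃ ω : ℂ → ℂ, DifferentiableOn ℂ ω (ball (0 : ℂ) 1) ∧
        (∫ z in ball (0 : ℂ) 1, ‖ω z‖ ^ 2) = 1 ∧
        r = ‖∫ z in ball (0 : ℂ) 1,
              ((starRingEnd ℂ) z / (‖z‖ : ℂ)) * ω z ^ 2‖}
      (2 * Real.sqrt 2 / 3) :=
  BeltramiProof.main_statement
end
end

section
/- Let a₀, a₁ ∈ ℂ with |a₀|² = 1/(2π) and |a₁|² = 1/π, and set ω(z) = a₀ + a₁ z. Then ∫_𝔻 |ω(z)|² dA(z) = 1 and |∫_𝔻 ( \overline{z}/|z| ) · ω(z)² dA(z)| = 2√2/3; that is, ω attains the supremum of |∫_𝔻 (\overline{z}/|z|) ω(z)² dA(z)| over all holomorphic ω on 𝔻 with L²-norm 1. -/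
open Metric MeasureTheory

namespace ExtremalAux

open Set

lemma inner_int (c₀ c₁ c₂ : ℂ) :
    (∫ θ in Ioo (-Real.pi) Real.pi,
        (c₀ * Complex.exp (-((θ:ℂ) * Complex.I)) + c₁ + c₂ * Complex.exp ((θ:ℂ) * Complex.I)))
      = 2 * Real.pi * c₁ := by
  have hle : (-Real.pi) ≤ Real.pi := by linarith [Real.pi_pos]
  rw [← integral_Ioc_eq_integral_Ioo, ← intervalIntegral.integral_of_le hle]
  have i1 : IntervalIntegrable (fun θ : ℝ => c₀ * Complex.exp (-((θ:ℂ) * Complex.I)))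
      volume (-Real.pi) Real.pi := by
    apply Continuous.intervalIntegrable; fun_prop
  have i2 : IntervalIntegrable (fun _ : ℝ => c₁) volume (-Real.pi) Real.pi :=
    intervalIntegrable_const
  have i3 : IntervalIntegrable (fun θ : ℝ => c₂ * Complex.exp ((θ:ℂ) * Complex.I))
      volume (-Real.pi) Real.pi := by
    apply Continuous.intervalIntegrable; fun_prop
  rw [intervalIntegral.integral_add (i1.add i2) i3, intervalIntegral.integral_add i1 i2,
    intervalIntegral.integral_const_mul, intervalIntegral.integral_const_mul]
  have e1 : (∫ θ in (-Real.pi)..Real.pi, Complex.exp (-((θ:ℂ) * Complex.I))) = 0 := by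
    have : ∀ θ : ℝ, -((θ:ℂ) * Complex.I) = (-Complex.I) * (θ:ℂ) := fun θ => by ring
    simp_rw [this]
    rw [integral_exp_mul_complex (by simp [Complex.I_ne_zero])]
    have a1 : Complex.exp (-Complex.I * ((Real.pi:ℝ):ℂ)) = -1 := by
      rw [show (-Complex.I * ((Real.pi:ℝ):ℂ)) = -(((Real.pi:ℝ):ℂ) * Complex.I) by ring,
        Complex.exp_neg, Complex.exp_pi_mul_I]
      norm_num
    have a2 : Complex.exp (-Complex.I * (((-Real.pi:ℝ)):ℂ)) = -1 := by
      push_cast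
      rw [show (-Complex.I * (-(Real.pi:ℂ))) = ((Real.pi:ℂ) * Complex.I) by ring,
        Complex.exp_pi_mul_I]
    rw [a1, a2]
    simp
  have e2 : (∫ θ in (-Real.pi)..Real.pi, Complex.exp ((θ:ℂ) * Complex.I)) = 0 := by
    have : ∀ θ : ℝ, ((θ:ℂ) * Complex.I) = Complex.I * (θ:ℂ) := fun θ => by ring
    simp_rw [this]
    rw [integral_exp_mul_complex Complex.I_ne_zero]
    have a1 : Complex.exp (Complex.I * ((Real.pi:ℝ):ℂ)) = -1 := by
      rw [mul_comm, Complex.exp_pi_mul_I]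
    have a2 : Complex.exp (Complex.I * (((-Real.pi:ℝ)):ℂ)) = -1 := by
      push_cast
      rw [show (Complex.I * (-(Real.pi:ℂ))) = -((Real.pi:ℂ) * Complex.I) by ring,
        Complex.exp_neg, Complex.exp_pi_mul_I]
      norm_num
    rw [a1, a2]
    simp
  rw [e1, e2, intervalIntegral.integral_const]
  simp only [mul_zero, zero_add, add_zero, sub_neg_eq_add]
  rw [Complex.real_smul]
  push_cast
  ring

lemma outer_int (b₁ b₂ b₃ : ℂ) :
    (∫ r in Ioo (0:ℝ) 1, (b₁ * (r:ℂ) + b₂ * (r:ℂ)^2 + b₃ * (r:ℂ)^3))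
      = b₁/2 + b₂/3 + b₃/4 := by
  rw [← integral_Ioc_eq_integral_Ioo, ← intervalIntegral.integral_of_le (by norm_num : (0:ℝ) ≤ 1)]
  have ip : ∀ n : ℕ, (∫ r in (0:ℝ)..1, ((r:ℂ))^n) = 1/(n+1) := by
    intro n
    have : ∀ r : ℝ, ((r:ℂ))^n = ((r^n : ℝ) : ℂ) := fun r => by push_cast; ring
    simp_rw [this]
    rw [intervalIntegral.integral_ofReal, integral_pow]
    push_cast; simp
  have i1 : IntervalIntegrable (fun r : ℝ => b₁ * (r:ℂ)) volume 0 1 := by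
    apply Continuous.intervalIntegrable; fun_prop
  have i2 : IntervalIntegrable (fun r : ℝ => b₂ * (r:ℂ)^2) volume 0 1 := by
    apply Continuous.intervalIntegrable; fun_prop
  have i3 : IntervalIntegrable (fun r : ℝ => b₃ * (r:ℂ)^3) volume 0 1 := by
    apply Continuous.intervalIntegrable; fun_prop
  rw [intervalIntegral.integral_add (i1.add i2) i3, intervalIntegral.integral_add i1 i2,
    intervalIntegral.integral_const_mul, intervalIntegral.integral_const_mul,
    intervalIntegral.integral_const_mul]
  have h1 := ip 1; have h2 := ip 2; have h3 := ip 3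
  simp only [pow_one] at h1
  rw [h1, h2, h3]
  push_cast
  ring

lemma polar_ball (f : ℂ → ℂ) :
    ∫ z in ball (0:ℂ) 1, f z
      = ∫ p in Ioo (0:ℝ) 1 ×ˢ Ioo (-Real.pi) Real.pi,
          (p.1 : ℂ) * f (Complex.polarCoord.symm p) := by
  have h1 : ∫ z in ball (0:ℂ) 1, f z = ∫ z, (ball (0:ℂ) 1).indicator f z := by
    rw [integral_indicator measurableSet_ball]
  rw [h1, ← Complex.integral_comp_polarCoord_symm]
  have h2 : ∀ p : ℝ × ℝ, p.1 • (ball (0:ℂ) 1).indicator f (Complex.polarCoord.symm p)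
      = ({p : ℝ × ℝ | |p.1| < 1}).indicator
          (fun p => (p.1 : ℂ) * f (Complex.polarCoord.symm p)) p := by
    intro p
    have hmem : Complex.polarCoord.symm p ∈ ball (0:ℂ) 1 ↔ |p.1| < 1 := by
      simp [mem_ball, Complex.dist_eq, Complex.norm_polarCoord_symm]
    by_cases h : |p.1| < 1
    · rw [Set.indicator_of_mem (hmem.mpr h), Set.indicator_of_mem
        (show p ∈ {p : ℝ × ℝ | |p.1| < 1} from h), Complex.real_smul]
    · rw [Set.indicator_of_notMem (fun hh => h (hmem.mp hh)),
        Set.indicator_of_notMem (show p ∉ {p : ℝ × ℝ | |p.1| < 1} from h), smul_zero]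
  have hmeas : MeasurableSet {p : ℝ × ℝ | |p.1| < 1} := by
    have : {p : ℝ × ℝ | |p.1| < 1} = (Ioo (-1:ℝ) 1) ×ˢ univ := by
      ext p; simp [abs_lt, and_comm]
    rw [this]; exact measurableSet_Ioo.prod MeasurableSet.univ
  have hset : polarCoord.target ∩ {p : ℝ × ℝ | |p.1| < 1}
      = Ioo (0:ℝ) 1 ×ˢ Ioo (-Real.pi) Real.pi := by
    rw [polarCoord_target]
    ext p
    simp only [mem_inter_iff, mem_prod, mem_Ioi, mem_Ioo, mem_setOf_eq]
    constructor
    · rintro ⟨⟨h1, h2⟩, h3⟩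
      exact ⟨⟨h1, (abs_lt.mp h3).2⟩, h2⟩
    · rintro ⟨⟨h1, h2⟩, h3⟩
      exact ⟨⟨h1, h3⟩, abs_lt.mpr ⟨by linarith, h2⟩⟩
  simp_rw [h2]
  rw [setIntegral_indicator hmeas, hset]

lemma fubini_polar (G : ℝ × ℝ → ℂ) (hG : Continuous G) :
    ∫ p in Ioo (0:ℝ) 1 ×ˢ Ioo (-Real.pi) Real.pi, G p
      = ∫ r in Ioo (0:ℝ) 1, ∫ θ in Ioo (-Real.pi) Real.pi, G (r, θ) := by
  have hint : IntegrableOn G (Ioo (0:ℝ) 1 ×ˢ Ioo (-Real.pi) Real.pi) volume :=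
    (hG.continuousOn.integrableOn_compact (isCompact_Icc.prod isCompact_Icc)).mono_set
      (prod_mono Ioo_subset_Icc_self Ioo_subset_Icc_self)
  rw [MeasureTheory.Measure.volume_eq_prod] at hint ⊢
  exact setIntegral_prod G hint

lemma polar_symm (p : ℝ × ℝ) :
    Complex.polarCoord.symm p = (p.1 : ℂ) * Complex.exp ((p.2:ℂ) * Complex.I) := by
  rw [Complex.polarCoord_symm_apply, Complex.exp_mul_I, Complex.ofReal_cos, Complex.ofReal_sin]

end ExtremalAux

open ExtremalAux Set in
/-- The extremal functions for the pairing with the Beltrami coefficient `μ₃*(z) = |z|/z`: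
if `|a₀|² = 1/(2π)` and `|a₁|² = 1/π`, then `ω(z) = a₀ + a₁ z` has `L²`-norm `1` on the
unit disk and attains the supremum value `|∫_𝔻 (z̄/|z|) ω(z)² dA(z)| = 2√2/3`. -/
theorem extremal_linear_function (a₀ a₁ : ℂ)
    (h₀ : ‖a₀‖ ^ 2 = 1 / (2 * Real.pi))
    (h₁ : ‖a₁‖ ^ 2 = 1 / Real.pi) :
    (∫ z in ball (0 : ℂ) 1, ‖a₀ + a₁ * z‖ ^ 2) = 1 ∧
      ‖∫ z in ball (0 : ℂ) 1,
          ((starRingEnd ℂ) z / ((‖z‖ : ℝ) : ℂ)) * (a₀ + a₁ * z) ^ 2‖ =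
        2 * Real.sqrt 2 / 3 := by
  have hπ : (0:ℝ) < Real.pi := Real.pi_pos
  have hπ0 : Real.pi ≠ 0 := ne_of_gt hπ
  have hmeasP : MeasurableSet (Ioo (0:ℝ) 1 ×ˢ Ioo (-Real.pi) Real.pi) :=
    measurableSet_Ioo.prod measurableSet_Ioo
  constructor
  · -- L² norm
    have key : (∫ z in ball (0:ℂ) 1, ((a₀ + a₁*z) * (starRingEnd ℂ) (a₀ + a₁*z)))
        = (2*(Real.pi:ℂ)*(a₀*(starRingEnd ℂ) a₀))/2 + 0/3
          + (2*(Real.pi:ℂ)*(a₁*(starRingEnd ℂ) a₁))/4 := by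
      calc ∫ z in ball (0:ℂ) 1, ((a₀ + a₁*z) * (starRingEnd ℂ) (a₀ + a₁*z))
          = ∫ p in Ioo (0:ℝ) 1 ×ˢ Ioo (-Real.pi) Real.pi,
              (p.1:ℂ) * ((a₀ + a₁*(Complex.polarCoord.symm p))
                * (starRingEnd ℂ) (a₀ + a₁*(Complex.polarCoord.symm p))) :=
            polar_ball _
        _ = ∫ p in Ioo (0:ℝ) 1 ×ˢ Ioo (-Real.pi) Real.pi,
              ((a₀*(starRingEnd ℂ) a₁*(p.1:ℂ)^2) * Complex.exp (-((p.2:ℂ) * Complex.I))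
                + (a₀*(starRingEnd ℂ) a₀*(p.1:ℂ) + a₁*(starRingEnd ℂ) a₁*(p.1:ℂ)^3)
                + (a₁*(starRingEnd ℂ) a₀*(p.1:ℂ)^2) * Complex.exp ((p.2:ℂ) * Complex.I)) := by
            refine setIntegral_congr_fun hmeasP fun p hp => ?_
            have hu : (starRingEnd ℂ) ((p.2:ℂ) * Complex.I) = -((p.2:ℂ) * Complex.I) := by
              simp [Complex.conj_ofReal]
            have hconj : (starRingEnd ℂ) (Complex.polarCoord.symm p)
                = (p.1:ℂ) * Complex.exp (-((p.2:ℂ) * Complex.I)) := by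
              rw [polar_symm, map_mul, Complex.conj_ofReal, ← Complex.exp_conj, hu]
            have huv : Complex.exp ((p.2:ℂ) * Complex.I)
                * Complex.exp (-((p.2:ℂ) * Complex.I)) = 1 := by
              rw [← Complex.exp_add]; simp
            rw [polar_symm] at hconj ⊢
            rw [map_add, map_mul, hconj]
            set u := Complex.exp ((p.2:ℂ) * Complex.I)
            set v := Complex.exp (-((p.2:ℂ) * Complex.I))
            linear_combination ((a₁*(starRingEnd ℂ) a₁)*(p.1:ℂ)^3) * huv
        _ = ∫ r in Ioo (0:ℝ) 1, ∫ θ in Ioo (-Real.pi) Real.pi,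
              ((a₀*(starRingEnd ℂ) a₁*(r:ℂ)^2) * Complex.exp (-((θ:ℂ) * Complex.I))
                + (a₀*(starRingEnd ℂ) a₀*(r:ℂ) + a₁*(starRingEnd ℂ) a₁*(r:ℂ)^3)
                + (a₁*(starRingEnd ℂ) a₀*(r:ℂ)^2) * Complex.exp ((θ:ℂ) * Complex.I)) :=
            fubini_polar _ (by fun_prop)
        _ = ∫ r in Ioo (0:ℝ) 1,
              (2*Real.pi*(a₀*(starRingEnd ℂ) a₀*(r:ℂ) + a₁*(starRingEnd ℂ) a₁*(r:ℂ)^3)) :=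
            setIntegral_congr_fun measurableSet_Ioo fun r _ => inner_int _ _ _
        _ = ∫ r in Ioo (0:ℝ) 1,
              ((2*(Real.pi:ℂ)*(a₀*(starRingEnd ℂ) a₀)) * (r:ℂ) + 0 * (r:ℂ)^2
                + (2*(Real.pi:ℂ)*(a₁*(starRingEnd ℂ) a₁)) * (r:ℂ)^3) :=
            setIntegral_congr_fun measurableSet_Ioo fun r _ => by ring
        _ = _ := outer_int _ _ _
    have key2 : (∫ z in ball (0:ℂ) 1, ((a₀ + a₁*z) * (starRingEnd ℂ) (a₀ + a₁*z)))
        = ((1:ℝ):ℂ) := by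
      rw [key, Complex.mul_conj, Complex.mul_conj]
      have e₀ : (Complex.normSq a₀ : ℝ) = 1/(2*Real.pi) := by
        rw [← h₀, Complex.normSq_eq_norm_sq]
      have e₁ : (Complex.normSq a₁ : ℝ) = 1/Real.pi := by
        rw [← h₁, Complex.normSq_eq_norm_sq]
      rw [e₀, e₁]
      push_cast
      have : (Real.pi:ℂ) ≠ 0 := Complex.ofReal_ne_zero.mpr hπ0
      field_simp
      ring
    have hg : ∀ z : ℂ, ‖a₀ + a₁*z‖^2 = ((a₀ + a₁*z) * (starRingEnd ℂ) (a₀ + a₁*z)).re := by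
      intro z
      rw [Complex.mul_conj, Complex.ofReal_re, Complex.normSq_eq_norm_sq]
    have hint : IntegrableOn (fun z : ℂ => (a₀ + a₁*z) * (starRingEnd ℂ) (a₀ + a₁*z))
        (ball (0:ℂ) 1) volume := by
      have hc : Continuous (fun z : ℂ => (a₀ + a₁*z) * (starRingEnd ℂ) (a₀ + a₁*z)) :=
        (continuous_const.add (continuous_const.mul continuous_id)).mul
          (Complex.continuous_conj.comp
            (continuous_const.add (continuous_const.mul continuous_id)))
      exact (hc.continuousOn.integrableOn_compact (isCompact_closedBall 0 1)).mono_set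
        ball_subset_closedBall
    calc (∫ z in ball (0:ℂ) 1, ‖a₀ + a₁*z‖^2)
        = ∫ z in ball (0:ℂ) 1, ((a₀ + a₁*z) * (starRingEnd ℂ) (a₀ + a₁*z)).re := by
          simp_rw [hg]
      _ = (∫ z in ball (0:ℂ) 1, ((a₀ + a₁*z) * (starRingEnd ℂ) (a₀ + a₁*z))).re := by
          rw [← RCLike.re_to_complex]
          rw [← integral_re hint]
          simp [RCLike.re_to_complex]
      _ = 1 := by rw [key2]; simp
  · -- the pairing
    have key : (∫ z in ball (0:ℂ) 1,
          ((starRingEnd ℂ) z / ((‖z‖ : ℝ) : ℂ)) * (a₀ + a₁ * z) ^ 2)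
        = 0/2 + (2*(Real.pi:ℂ)*(2*a₀*a₁))/3 + 0/4 := by
      calc ∫ z in ball (0:ℂ) 1, ((starRingEnd ℂ) z / ((‖z‖ : ℝ) : ℂ)) * (a₀ + a₁ * z) ^ 2
          = ∫ p in Ioo (0:ℝ) 1 ×ˢ Ioo (-Real.pi) Real.pi,
              (p.1:ℂ) * (((starRingEnd ℂ) (Complex.polarCoord.symm p)
                  / ((‖Complex.polarCoord.symm p‖ : ℝ) : ℂ))
                * (a₀ + a₁ * (Complex.polarCoord.symm p)) ^ 2) :=
            polar_ball _
        _ = ∫ p in Ioo (0:ℝ) 1 ×ˢ Ioo (-Real.pi) Real.pi,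
              ((a₀^2*(p.1:ℂ)) * Complex.exp (-((p.2:ℂ) * Complex.I))
                + (2*a₀*a₁*(p.1:ℂ)^2)
                + (a₁^2*(p.1:ℂ)^3) * Complex.exp ((p.2:ℂ) * Complex.I)) := by
            refine setIntegral_congr_fun hmeasP fun p hp => ?_
            have hr : (0:ℝ) < p.1 := hp.1.1
            have hr0 : ((p.1:ℝ):ℂ) ≠ 0 := Complex.ofReal_ne_zero.mpr (ne_of_gt hr)
            have hu : (starRingEnd ℂ) ((p.2:ℂ) * Complex.I) = -((p.2:ℂ) * Complex.I) := by
              simp [Complex.conj_ofReal]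
            have hconj : (starRingEnd ℂ) (Complex.polarCoord.symm p)
                = (p.1:ℂ) * Complex.exp (-((p.2:ℂ) * Complex.I)) := by
              rw [polar_symm, map_mul, Complex.conj_ofReal, ← Complex.exp_conj, hu]
            have habs : ((‖Complex.polarCoord.symm p‖ : ℝ) : ℂ) = ((p.1:ℝ):ℂ) := by
              rw [Complex.norm_polarCoord_symm, abs_of_pos hr]
            have huv : Complex.exp ((p.2:ℂ) * Complex.I)
                * Complex.exp (-((p.2:ℂ) * Complex.I)) = 1 := by
              rw [← Complex.exp_add]; simp
            rw [hconj, habs, polar_symm]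
            set u := Complex.exp ((p.2:ℂ) * Complex.I)
            set v := Complex.exp (-((p.2:ℂ) * Complex.I))
            rw [mul_div_cancel_left₀ v hr0]
            linear_combination ((p.1:ℂ) * (2*a₀*a₁*(p.1:ℂ) + a₁^2*(p.1:ℂ)^2*u)) * huv
        _ = ∫ r in Ioo (0:ℝ) 1, ∫ θ in Ioo (-Real.pi) Real.pi,
              ((a₀^2*(r:ℂ)) * Complex.exp (-((θ:ℂ) * Complex.I))
                + (2*a₀*a₁*(r:ℂ)^2)
                + (a₁^2*(r:ℂ)^3) * Complex.exp ((θ:ℂ) * Complex.I)) :=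
            fubini_polar _ (by fun_prop)
        _ = ∫ r in Ioo (0:ℝ) 1, (2*Real.pi*(2*a₀*a₁*(r:ℂ)^2)) :=
            setIntegral_congr_fun measurableSet_Ioo fun r _ => inner_int _ _ _
        _ = ∫ r in Ioo (0:ℝ) 1,
              ((0:ℂ) * (r:ℂ) + (2*(Real.pi:ℂ)*(2*a₀*a₁)) * (r:ℂ)^2 + 0 * (r:ℂ)^3) :=
            setIntegral_congr_fun measurableSet_Ioo fun r _ => by ring
        _ = _ := outer_int _ _ _
    rw [key]
    have : ((0:ℂ)/2 + (2*(Real.pi:ℂ)*(2*a₀*a₁))/3 + 0/4)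
        = ((4*Real.pi/3 : ℝ):ℂ) * (a₀ * a₁) := by push_cast; ring
    rw [this, norm_mul, norm_mul, Complex.norm_real, Real.norm_eq_abs,
      abs_of_pos (by positivity)]
    set A := ‖a₀‖ with hA
    set B := ‖a₁‖ with hB
    have hA0 : 0 ≤ A := norm_nonneg a₀
    have hB0 : 0 ≤ B := norm_nonneg a₁
    have h2 : Real.sqrt 2 ^ 2 = 2 := Real.sq_sqrt (by norm_num)
    have hsq : (4*Real.pi/3 * (A*B))^2 = (2*Real.sqrt 2/3)^2 := by
      have expand : (4*Real.pi/3 * (A*B))^2 = 16*Real.pi^2/9 * (A^2*B^2) := by ring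
      rw [expand, h₀, h₁]
      field_simp
      nlinarith [h2]
    have hl : 0 ≤ 4*Real.pi/3 * (A*B) := by positivity
    have hr : 0 ≤ 2*Real.sqrt 2/3 := by positivity
    calc 4*Real.pi/3 * (A*B) = Real.sqrt ((4*Real.pi/3 * (A*B))^2) := (Real.sqrt_sq hl).symm
      _ = Real.sqrt ((2*Real.sqrt 2/3)^2) := by rw [hsq]
      _ = 2*Real.sqrt 2/3 := Real.sqrt_sq hr
end
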